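/- arXiv:2001.11098 — 3 statements merged into one kernel-verified Lean document; each statement's English description precedes it below -/
import Mathlib

section
/- Let 0 < λ ≤ 1 and let p be analytic on 𝔻 with p(0) = 1, p not identically equal to 1, and p(z) ≠ 0 for all z ∈ 𝔻. If Re(z p'(z)/p(z)) < λ/2 for all z ∈ 𝔻, then there exists an integer n ≥ 1 such that p(z) ≺ (1 + z^n)^{λ/n} on 𝔻. -/
open Complex Metric

/-- `p ≺ q` on the unit disk: there is an analytic `ω : 𝔻 → 𝔻` with `ω 0 = 0`
and `p = q ∘ ω` on `𝔻`. -/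
def Subord (p q : ℂ → ℂ) : Prop :=
  ∃ ω : ℂ → ℂ, DifferentiableOn ℂ ω (ball 0 1) ∧
    Set.MapsTo ω (ball 0 1) (ball 0 1) ∧ ω 0 = 0 ∧
    ∀ z ∈ ball (0:ℂ) 1, p z = q (ω z)


open Complex Metric FormalMultilinearSeries

lemma eball_one : Metric.eball (0:ℂ) (1:ENNReal) = ball (0:ℂ) 1 := by
  rw [show ((1:ENNReal)) = ((1:NNReal):ENNReal) from (ENNReal.coe_one).symm,
    Metric.emetric_ball_nnreal, NNReal.coe_one]

theorem exists_primitive (f : ℂ → ℂ) (hf : DifferentiableOn ℂ f (ball 0 1)) :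
    ∃ L : ℂ → ℂ, DifferentiableOn ℂ L (ball 0 1) ∧ L 0 = 0 ∧
      ∀ z ∈ ball (0:ℂ) 1, HasDerivAt L (f z) z := by
  set a : ℕ → ℂ := fun n => (n.factorial : ℂ)⁻¹ * iteratedDeriv n f 0 with ha
  have hSum : ∀ z ∈ ball (0:ℂ) 1, HasSum (fun n => a n * z ^ n) (f z) := by
    intro z hz
    have := Complex.hasSum_taylorSeries_on_ball hf hz
    refine this.congr_fun fun n => ?_
    simp only [ha, sub_zero, smul_eq_mul]
    ring
  set b : ℕ → ℂ := fun n => if n = 0 then 0 else a (n-1) * ((n:ℕ):ℂ)⁻¹ with hb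
  have hbsucc : ∀ n : ℕ, b (n+1) = a n * (((n+1:ℕ)):ℂ)⁻¹ := by
    intro n; simp [hb]
  set q : FormalMultilinearSeries ℂ ℂ ℂ := ofScalars ℂ b with hq
  have hqnorm : ∀ n, ‖q n‖ = ‖b n‖ := fun n => ofScalars_norm ℂ b n
  have hrad : 1 ≤ q.radius := by
    apply ENNReal.le_of_forall_nnreal_lt
    intro r hr
    have hr1 : (r:ℝ) < 1 := by exact_mod_cast hr
    have hz : ((r:ℝ):ℂ) ∈ ball (0:ℂ) 1 := by
      rw [mem_ball_zero_iff]
      simpa [Complex.norm_real, Real.norm_of_nonneg r.coe_nonneg] using hr1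
    have hsum := (hSum _ hz).summable
    have htend := hsum.tendsto_atTop_zero
    obtain ⟨C, hC⟩ := htend.norm.bddAbove_range
    simp only [upperBounds, Set.mem_range, forall_exists_index, Set.mem_setOf_eq] at hC
    have hC' : ∀ n, ‖a n‖ * (r:ℝ) ^ n ≤ C := by
      intro n
      have := hC n rfl
      rwa [norm_mul, norm_pow, Complex.norm_real, Real.norm_of_nonneg r.coe_nonneg] at this
    have hC0 : 0 ≤ C := le_trans (by positivity) (hC' 0)
    apply q.le_radius_of_bound C
    intro n
    rw [hqnorm]
    cases n with
    | zero => simpa [hb] using hC0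
    | succ m =>
      rw [hbsucc, norm_mul]
      have e1 : ‖(((m+1:ℕ)):ℂ)⁻¹‖ ≤ 1 := by
        rw [norm_inv]
        apply inv_le_one_of_one_le₀
        rw [Complex.norm_natCast]
        exact_mod_cast Nat.succ_le_succ (Nat.zero_le m)
      have e2 : (r:ℝ) ^ (m+1) ≤ (r:ℝ) ^ m :=
        pow_le_pow_of_le_one r.coe_nonneg hr1.le (Nat.le_succ m)
      calc ‖a m‖ * ‖(((m+1:ℕ)):ℂ)⁻¹‖ * (r:ℝ) ^ (m+1)
          ≤ ‖a m‖ * 1 * (r:ℝ) ^ m :=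
            mul_le_mul (mul_le_mul le_rfl e1 (norm_nonneg _) (norm_nonneg _)) e2
              (by positivity) (by positivity)
        _ = ‖a m‖ * (r:ℝ) ^ m := by ring
        _ ≤ C := hC' m
  have hq0 : 0 < q.radius := lt_of_lt_of_le zero_lt_one hrad
  have hL : HasFPowerSeriesOnBall q.sum q 0 1 :=
    (q.hasFPowerSeriesOnBall hq0).mono zero_lt_one hrad
  refine ⟨q.sum, ?_, ?_, ?_⟩
  · have := hL.differentiableOn
    rwa [eball_one] at this
  · have h0 := hL.coeff_zero (fun _ => (0:ℂ))
    have : q 0 (fun _ => (0:ℂ)) = 0 := by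
      rw [hq, ofScalars_apply_eq]
      simp [hb]
    rw [this] at h0
    exact h0.symm
  · -- derivative of the sum is f
    have hDiff : DifferentiableOn ℂ q.sum (ball 0 1) := by
      have := hL.differentiableOn; rwa [eball_one] at this
    have hderiv_ne : ∀ z ∈ ball (0:ℂ) 1, z ≠ 0 → deriv q.sum z = f z := by
      intro z hz hz0
      have hze : z ∈ Metric.eball (0:ℂ) 1 := by rwa [eball_one]
      have hd : HasFPowerSeriesOnBall (fderiv ℂ q.sum) q.derivSeries 0 1 := hL.fderiv
      have hsum1 : HasSum (fun n => q.derivSeries n (fun _ => z)) (fderiv ℂ q.sum (0 + z)) :=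
        hd.hasSum hze
      have hsum2 : HasSum (fun n => (q.derivSeries n (fun _ => z)) z)
          ((fderiv ℂ q.sum (0 + z)) z) :=
        hsum1.mapL (ContinuousLinearMap.apply ℂ ℂ z)
      have hterm : ∀ n, (q.derivSeries n (fun _ => z)) z = a n * z ^ (n+1) := by
        intro n
        have hne : (((n+1:ℕ)):ℂ) ≠ 0 := by exact_mod_cast (Nat.succ_ne_zero n)
        rw [derivSeries_apply_diag, hq, ofScalars_apply_eq, hbsucc, smul_eq_mul, nsmul_eq_mul,
          show (((n+1:ℕ):ℂ)) * (a n * (((n+1:ℕ)):ℂ)⁻¹ * z ^ (n+1)) =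
            ((((n+1:ℕ)):ℂ) * (((n+1:ℕ)):ℂ)⁻¹) * (a n * z ^ (n+1)) from by ring,
          mul_inv_cancel₀ hne, one_mul]
      rw [funext hterm] at hsum2
      rw [zero_add] at hsum2
      have hsum3 : HasSum (fun n => a n * z ^ (n+1)) (z * f z) :=
        ((hSum z hz).mul_left z).congr_fun (fun n => by ring)
      have heq : (fderiv ℂ q.sum z) z = z * f z := hsum2.unique hsum3
      have heq2 : (fderiv ℂ q.sum z) z = z * deriv q.sum z := by
        calc (fderiv ℂ q.sum z) z = (fderiv ℂ q.sum z) (z • 1) := by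
              rw [smul_eq_mul, mul_one]
          _ = z • ((fderiv ℂ q.sum z) 1) := (fderiv ℂ q.sum z).map_smul z 1
          _ = z * deriv q.sum z := by rw [smul_eq_mul, fderiv_apply_one_eq_deriv]
      exact mul_left_cancel₀ hz0 (heq2.symm.trans heq)
    have h0mem : (0:ℂ) ∈ ball (0:ℂ) 1 := by simp
    have hAnal : AnalyticOnNhd ℂ q.sum (ball 0 1) := hDiff.analyticOnNhd isOpen_ball
    have hderiv0 : deriv q.sum 0 = f 0 := by
      have hc1 : ContinuousAt (deriv q.sum) 0 :=
        ((hAnal.deriv 0 h0mem).differentiableAt.continuousAt)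
      have hc2 : ContinuousAt f 0 :=
        (hf.differentiableAt (isOpen_ball.mem_nhds h0mem)).continuousAt
      have hev : deriv q.sum =ᶠ[nhdsWithin 0 {(0:ℂ)}ᶜ] f := by
        have hball : ball (0:ℂ) 1 ∈ nhdsWithin (0:ℂ) {(0:ℂ)}ᶜ :=
          nhdsWithin_le_nhds (isOpen_ball.mem_nhds h0mem)
        filter_upwards [hball, self_mem_nhdsWithin] with z hz hz0
        exact hderiv_ne z hz hz0
      have t1 : Filter.Tendsto (deriv q.sum) (nhdsWithin 0 {(0:ℂ)}ᶜ)
          (nhds (deriv q.sum 0)) := hc1.continuousWithinAt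
      have t2 : Filter.Tendsto (deriv q.sum) (nhdsWithin 0 {(0:ℂ)}ᶜ) (nhds (f 0)) :=
        Filter.Tendsto.congr' hev.symm hc2.continuousWithinAt
      exact tendsto_nhds_unique t1 t2
    intro z hz
    have hd := (hDiff.differentiableAt (isOpen_ball.mem_nhds hz)).hasDerivAt
    rcases eq_or_ne z 0 with rfl | hz0
    · rwa [hderiv0] at hd
    · rwa [hderiv_ne z hz hz0] at hd
theorem exists_log (p : ℂ → ℂ) (hp : DifferentiableOn ℂ p (ball 0 1)) (hp0 : p 0 = 1)
    (hpne0 : ∀ z ∈ ball (0:ℂ) 1, p z ≠ 0) :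
    ∃ L : ℂ → ℂ, DifferentiableOn ℂ L (ball 0 1) ∧ L 0 = 0 ∧
      (∀ z ∈ ball (0:ℂ) 1, HasDerivAt L (deriv p z / p z) z) ∧
      (∀ z ∈ ball (0:ℂ) 1, Complex.exp (L z) = p z) := by
  have hpd : DifferentiableOn ℂ (fun z => deriv p z) (ball 0 1) :=
    ((hp.analyticOnNhd isOpen_ball).deriv).differentiableOn
  have hf : DifferentiableOn ℂ (fun z => deriv p z / p z) (ball 0 1) :=
    hpd.div hp hpne0
  obtain ⟨L, hLd, hL0, hLD⟩ := exists_primitive _ hf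
  refine ⟨L, hLd, hL0, hLD, ?_⟩
  have key : ∀ z ∈ ball (0:ℂ) 1, p z * Complex.exp (-L z) = 1 := by
    have hg : DifferentiableOn ℂ (fun z => p z * Complex.exp (-L z)) (ball 0 1) :=
      hp.mul ((hLd.neg).cexp)
    have hd0 : ∀ x ∈ ball (0:ℂ) 1,
        fderivWithin ℂ (fun z => p z * Complex.exp (-L z)) (ball 0 1) x = 0 := by
      intro x hx
      have hpx : HasDerivAt p (deriv p x) x :=
        (hp.differentiableAt (isOpen_ball.mem_nhds hx)).hasDerivAt
      have hLx : HasDerivAt (fun z => Complex.exp (-L z))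
          (Complex.exp (-L x) * (-(deriv p x / p x))) x := ((hLD x hx).neg).cexp
      have hprod := hpx.mul hLx
      have : deriv p x * Complex.exp (-L x) +
          p x * (Complex.exp (-L x) * (-(deriv p x / p x))) = 0 := by
        field_simp [hpne0 x hx]
        ring
      rw [this] at hprod
      have := (hprod.hasFDerivAt.hasFDerivWithinAt).fderivWithin (isOpen_ball.uniqueDiffOn x hx)
      rw [show (fun z => p z * Complex.exp (-L z)) = (p * fun z => Complex.exp (-L z)) from rfl, this]
      exact ContinuousLinearMap.ext fun y => by simp
    intro z hz
    have h0 : (0:ℂ) ∈ ball (0:ℂ) 1 := by simp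
    have := (convex_ball (0:ℂ) 1).is_const_of_fderivWithin_eq_zero hg hd0 hz h0
    rwa [hp0, hL0, neg_zero, Complex.exp_zero, one_mul] at this
  intro z hz
  have h := key z hz
  rw [Complex.exp_neg] at h
  field_simp at h
  exact h.symm

lemma hasDerivAt_normSq_comp {G : ℝ → ℂ} {g' : ℂ} {t : ℝ} (h : HasDerivAt G g' t) :
    HasDerivAt (fun s => Complex.normSq (G s)) (2 * ((starRingEnd ℂ) (G t) * g').re) t := by
  have hre : HasDerivAt (fun s => (G s).re) ((Complex.reCLM : ℂ →L[ℝ] ℝ) g') t :=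
    Complex.reCLM.hasFDerivAt.comp_hasDerivAt t h
  have him : HasDerivAt (fun s => (G s).im) ((Complex.imCLM : ℂ →L[ℝ] ℝ) g') t :=
    Complex.imCLM.hasFDerivAt.comp_hasDerivAt t h
  have h2 := (hre.mul hre).add (him.mul him)
  have heq : (fun s => (G s).re * (G s).re + (G s).im * (G s).im)
      = fun s => Complex.normSq (G s) := by
    funext s; rw [Complex.normSq_apply]
  change HasDerivAt (fun s => (G s).re * (G s).re + (G s).im * (G s).im) _ t at h2
  rw [heq] at h2
  convert h2 using 1
  simp only [Complex.reCLM_apply, Complex.imCLM_apply, Complex.mul_re,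
    Complex.conj_re, Complex.conj_im]
  ring


set_option maxHeartbeats 1600000 in
/-- If `p` is analytic on `𝔻` with `p 0 = 1`, `p` not identically `1`,
`p ≠ 0` on `𝔻`, and `Re (z p'(z)/p(z)) < λ/2` on `𝔻` (`0 < λ ≤ 1`), then there is an
integer `n ≥ 1` with `p ≺ (1 + z^n)^{λ/n}` on `𝔻`. -/
theorem stmt1 (lam : ℝ) (hlam0 : 0 < lam) (hlam1 : lam ≤ 1)
    (p : ℂ → ℂ) (hp : DifferentiableOn ℂ p (ball 0 1))
    (hp0 : p 0 = 1)
    (hpne1 : ¬ (∀ z ∈ ball (0:ℂ) 1, p z = 1))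
    (hpne0 : ∀ z ∈ ball (0:ℂ) 1, p z ≠ 0)
    (hre : ∀ z ∈ ball (0:ℂ) 1, (z * deriv p z / p z).re < lam / 2) :
    ∃ n : ℕ, 1 ≤ n ∧
      Subord p (fun z => Complex.exp (((lam / n : ℝ) : ℂ) * Complex.log (1 + z ^ n))) := by
  obtain ⟨L, hLd, hL0, hLD, hLexp⟩ := exists_log p hp hp0 hpne0
  have hlamC : ((lam:ℝ):ℂ) ≠ 0 := Complex.ofReal_ne_zero.mpr hlam0.ne'
  set M : ℂ → ℂ := fun z => ((lam:ℝ):ℂ)⁻¹ * L z with hM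
  set ω : ℂ → ℂ := fun z => Complex.exp (M z) - 1 with hω
  have hMd : ∀ z ∈ ball (0:ℂ) 1,
      HasDerivAt M (((lam:ℝ):ℂ)⁻¹ * (deriv p z / p z)) z :=
    fun z hz => (hLD z hz).const_mul _
  have hωd : ∀ z ∈ ball (0:ℂ) 1,
      HasDerivAt ω (Complex.exp (M z) * (((lam:ℝ):ℂ)⁻¹ * (deriv p z / p z))) z :=
    fun z hz => ((hMd z hz).cexp).sub_const 1
  have hM0 : M 0 = 0 := by rw [hM]; simp [hL0]
  have hω0 : ω 0 = 0 := by rw [hω]; simp [hM0]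
  have hωdiff : DifferentiableOn ℂ ω (ball 0 1) :=
    ((hLd.const_mul _).cexp).sub_const 1
  have hexpM : ∀ z ∈ ball (0:ℂ) 1, Complex.exp (M z) = 1 + ω z := by
    intro z _; rw [hω]; ring
  have hre' : ∀ z ∈ ball (0:ℂ) 1,
      (z * (((lam:ℝ):ℂ)⁻¹ * (deriv p z / p z))).re < 1 / 2 := by
    intro z hz
    have h1 : z * (((lam:ℝ):ℂ)⁻¹ * (deriv p z / p z))
        = ((lam⁻¹ : ℝ):ℂ) * (z * deriv p z / p z) := by
      push_cast; ring
    rw [h1, Complex.re_ofReal_mul]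
    have h2 : lam⁻¹ * (z * deriv p z / p z).re < lam⁻¹ * (lam / 2) :=
      (mul_lt_mul_iff_right₀ (by positivity)).mpr (hre z hz)
    have h3 : lam⁻¹ * (lam / 2) = 1 / 2 := by field_simp
    rwa [h3] at h2
  -- Jack's lemma argument: ω maps the disk into the disk
  have hmaps : ∀ z ∈ ball (0:ℂ) 1, ‖ω z‖ < 1 := by
    by_contra hcon
    push_neg at hcon
    obtain ⟨z1, hz1, hz1ge⟩ := hcon
    set r1 := ‖z1‖ with hr1
    have hr1lt : r1 < 1 := by
      rw [hr1]
      exact mem_ball_zero_iff.mp hz1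
    set A : Set ℂ := {z | z ∈ closedBall (0:ℂ) r1 ∧ 1 ≤ ‖ω z‖} with hA
    have hωcont : ContinuousOn ω (ball 0 1) := hωdiff.continuousOn
    have hsub : closedBall (0:ℂ) r1 ⊆ ball 0 1 := by
      intro z hz
      rw [mem_closedBall_zero_iff] at hz
      rw [mem_ball_zero_iff]
      exact lt_of_le_of_lt hz hr1lt
    have hAcl : IsClosed A := by
      have hAeq : A = closedBall (0:ℂ) r1 ∩ (fun z => ‖ω z‖) ⁻¹' (Set.Ici 1) := by
        ext z; simp [hA, Set.mem_setOf_eq, Set.mem_preimage, and_comm]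
      rw [hAeq]
      exact ContinuousOn.preimage_isClosed_of_isClosed
        (continuous_norm.comp_continuousOn (hωcont.mono hsub))
        Metric.isClosed_closedBall isClosed_Ici
    have hAcpt : IsCompact A :=
      (isCompact_closedBall (0:ℂ) r1).of_isClosed_subset hAcl (fun z hz => hz.1)
    have hAne : A.Nonempty := ⟨z1, ⟨mem_closedBall_zero_iff.mpr le_rfl, hz1ge⟩⟩
    obtain ⟨z0, hz0A, hz0min⟩ := hAcpt.exists_isMinOn hAne continuous_norm.continuousOn
    have hz0ball : z0 ∈ ball (0:ℂ) 1 := hsub hz0A.1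
    set r0 := ‖z0‖ with hr0
    have hz0ne : z0 ≠ 0 := by
      intro h
      have h2 := hz0A.2
      rw [h, hω0] at h2
      simp only [norm_zero] at h2
      linarith
    have hr0pos : 0 < r0 := norm_pos_iff.mpr hz0ne
    have hr0le : r0 ≤ r1 := mem_closedBall_zero_iff.mp hz0A.1
    have hball : ∀ z : ℂ, ‖z‖ ≤ r0 → ‖ω z‖ ≤ 1 := by
      intro z hzr
      by_contra hgt
      push_neg at hgt
      have hz0' : z ≠ 0 := by
        intro h
        rw [h, hω0] at hgt
        simp only [norm_zero] at hgt
        linarith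
      have hzpos : 0 < ‖z‖ := norm_pos_iff.mpr hz0'
      have hzball : z ∈ ball (0:ℂ) 1 :=
        mem_ball_zero_iff.mpr (lt_of_le_of_lt (hzr.trans hr0le) hr1lt)
      have hcont : ContinuousAt (fun t : ℝ => ‖ω ((t:ℂ) * z)‖) 1 := by
        apply continuous_norm.continuousAt.comp
        apply (hωcont.continuousAt (isOpen_ball.mem_nhds (by simpa using hzball))).comp
        exact (Complex.continuous_ofReal.mul continuous_const).continuousAt
      have hval : 1 < ‖ω (((1:ℝ):ℂ) * z)‖ := by simpa using hgt
      have hev : ∀ᶠ t : ℝ in nhds (1:ℝ), 1 < ‖ω ((t:ℂ) * z)‖ :=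
        hcont.eventually (eventually_gt_nhds hval)
      have hev2 : ∀ᶠ t : ℝ in nhdsWithin (1:ℝ) (Set.Iio 1),
          1 < ‖ω ((t:ℂ) * z)‖ ∧ t ∈ Set.Ioo (0:ℝ) 1 := by
        refine Filter.Eventually.and (hev.filter_mono nhdsWithin_le_nhds) ?_
        exact Ioo_mem_nhdsLT_of_mem (Set.mem_Ioc.mpr ⟨zero_lt_one, le_rfl⟩)
      obtain ⟨t, ht1, ht2⟩ := hev2.exists
      have hz'A : ((t:ℂ) * z) ∈ A := by
        constructor
        · rw [mem_closedBall_zero_iff]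
          have : ‖(t:ℂ) * z‖ = |t| * ‖z‖ := by
            rw [norm_mul, Complex.norm_real, Real.norm_eq_abs]
          rw [this, _root_.abs_of_pos ht2.1]
          nlinarith [hzr.trans hr0le, hzpos, ht2.1, ht2.2]
        · exact ht1.le
      have hmin := hz0min hz'A
      have hlt : ‖(t:ℂ) * z‖ < r0 := by
        have : ‖(t:ℂ) * z‖ = |t| * ‖z‖ := by
          rw [norm_mul, Complex.norm_real, Real.norm_eq_abs]
        rw [this, _root_.abs_of_pos ht2.1]
        nlinarith [hzr, hzpos, ht2.1, ht2.2]
      have : r0 ≤ ‖(t:ℂ) * z‖ := hmin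
      linarith
    have hω1 : ‖ω z0‖ = 1 := le_antisymm (hball z0 le_rfl) hz0A.2
    set w := ω z0 with hw
    have hw2 : Complex.normSq w = 1 := by
      rw [← Complex.sq_norm, hω1]; norm_num
    have hw2' : w.re * w.re + w.im * w.im = 1 := by
      have := hw2; rwa [Complex.normSq_apply] at this
    set dω := Complex.exp (M z0) * (((lam:ℝ):ℂ)⁻¹ * (deriv p z0 / p z0)) with hdω
    have hdωd : HasDerivAt ω dω z0 := hωd z0 hz0ball
    set c : ℂ := (starRingEnd ℂ) w * (z0 * dω) with hc
    -- Schwarz lemma bound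
    have hsch : ∀ t : ℝ, t ∈ Set.Ico (0:ℝ) 1 → ‖ω ((t:ℂ) * z0)‖ ≤ t := by
      intro t ht
      apply le_of_forall_pos_le_add
      intro ε hε
      have hd : DifferentiableOn ℂ ω (ball 0 r0) :=
        hωdiff.mono (fun y hy => mem_ball_zero_iff.mpr
          (lt_of_lt_of_le (mem_ball_zero_iff.mp hy) (hr0le.trans hr1lt.le)))
      have hmapsball : Set.MapsTo ω (ball 0 r0) (ball (ω 0) (1 + ε)) := by
        intro y hy
        rw [hω0, mem_ball_zero_iff]
        have h1 : ‖ω y‖ ≤ 1 := hball y (le_of_lt (mem_ball_zero_iff.mp hy))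
        calc ‖ω y‖ = ‖ω y‖ := rfl
          _ ≤ 1 := h1
          _ < 1 + ε := by linarith
      have hzmem : (t:ℂ) * z0 ∈ ball (0:ℂ) r0 := by
        rw [mem_ball_zero_iff]
        have : ‖(t:ℂ) * z0‖ = |t| * r0 := by
          rw [norm_mul, Complex.norm_real, Real.norm_eq_abs]
        rw [this, _root_.abs_of_nonneg ht.1]
        nlinarith [ht.2]
      have hSch := Complex.dist_le_div_mul_dist_of_mapsTo_ball hd (hmapsball.mono_right ball_subset_closedBall) hzmem
      rw [hω0, dist_zero_right, dist_zero_right] at hSch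
      have hn : ‖(t:ℂ) * z0‖ = |t| * r0 := by
        rw [norm_mul, Complex.norm_real, Real.norm_eq_abs]
      rw [hn, _root_.abs_of_nonneg ht.1] at hSch
      have : (1 + ε) / r0 * (t * r0) = (1 + ε) * t := by
        field_simp
      rw [this] at hSch
      calc ‖ω ((t:ℂ) * z0)‖ = ‖ω ((t:ℂ) * z0)‖ := rfl
        _ ≤ (1 + ε) * t := hSch
        _ ≤ t + ε := by nlinarith [ht.1, ht.2]
    -- radial derivative
    have hGd : HasDerivAt (fun t : ℝ => ω ((t:ℂ) * z0)) (z0 • dω) 1 := by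
      have hin : HasDerivAt (fun t : ℝ => (t:ℂ) * z0) z0 1 := by
        simpa using (Complex.ofRealCLM.hasDerivAt.mul_const z0)
      have hout : HasDerivAt ω dω (((1:ℝ):ℂ) * z0) := by simpa using hdωd
      exact hout.scomp 1 hin
    have hFd : HasDerivAt (fun s : ℝ => Complex.normSq (ω ((s:ℂ) * z0))) (2 * c.re) 1 := by
      have := hasDerivAt_normSq_comp hGd
      simpa [hc, smul_eq_mul, mul_assoc] using this
    have hd2 : 2 ≤ 2 * c.re := by
      have htend : Filter.Tendsto (slope (fun s : ℝ => Complex.normSq (ω ((s:ℂ) * z0))) 1)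
          (nhdsWithin 1 (Set.Iio 1)) (nhds (2 * c.re)) :=
        (hasDerivAt_iff_tendsto_slope.mp hFd).mono_left
          (nhdsWithin_mono 1 (fun x hx => ne_of_lt hx))
      have hl2 : Filter.Tendsto (fun t : ℝ => 1 + t)
          (nhdsWithin (1:ℝ) (Set.Iio 1)) (nhds 2) := by
        have h : Filter.Tendsto (fun t : ℝ => 1 + t) (nhds (1:ℝ)) (nhds (1 + 1)) :=
          Filter.Tendsto.const_add 1 Filter.tendsto_id
        have h2 : (1:ℝ) + 1 = 2 := by norm_num
        rw [h2] at h
        exact h.mono_left nhdsWithin_le_nhds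
      have hslope : ∀ᶠ t in nhdsWithin (1:ℝ) (Set.Iio 1),
          1 + t ≤ slope (fun s : ℝ => Complex.normSq (ω ((s:ℂ) * z0))) 1 t := by
        filter_upwards [Ioo_mem_nhdsLT_of_mem (Set.mem_Ioc.mpr ⟨zero_lt_one, le_rfl⟩)] with t ht
        rw [slope_def_field]
        have hFt : Complex.normSq (ω ((t:ℂ) * z0)) ≤ t^2 := by
          have h1 := hsch t ⟨ht.1.le, ht.2⟩
          rw [← Complex.sq_norm]
          have h0 : 0 ≤ ‖ω ((t:ℂ) * z0)‖ := norm_nonneg _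
          nlinarith
        have hF1 : Complex.normSq (ω (((1:ℝ):ℂ) * z0)) = 1 := by
          simp only [Complex.ofReal_one, one_mul]
          rw [← hw, hw2]
        rw [hF1]
        rw [le_div_iff_of_neg (by linarith [ht.2] : t - 1 < 0)]
        nlinarith [hFt, ht.1, ht.2]
      exact le_of_tendsto_of_tendsto hl2 htend hslope
    have hcre : 1 ≤ c.re := by linarith
    -- tangential derivative
    have hHd : HasDerivAt (fun θ : ℝ => ω (Complex.exp ((θ:ℂ) * Complex.I) * z0))
        ((Complex.I * z0) • dω) 0 := by
      have h1 : HasDerivAt (fun θ : ℝ => (θ:ℂ) * Complex.I) Complex.I 0 := by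
        simpa using (Complex.ofRealCLM.hasDerivAt.mul_const Complex.I)
      have h2 := h1.cexp
      have h3 := h2.mul_const z0
      have h4 : HasDerivAt ω dω (Complex.exp (((0:ℝ):ℂ) * Complex.I) * z0) := by
        simpa using hdωd
      have h5 := h4.scomp 0 h3
      simp only [Complex.ofReal_zero, zero_mul, Complex.exp_zero, one_mul] at h5 ⊢
      exact h5
    have hΘd : HasDerivAt
        (fun θ : ℝ => Complex.normSq (ω (Complex.exp ((θ:ℂ) * Complex.I) * z0)))
        (2 * ((starRingEnd ℂ) w * ((Complex.I * z0) • dω)).re) 0 := by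
      have := hasDerivAt_normSq_comp hHd
      simpa using this
    have hΘmax : IsLocalMax
        (fun θ : ℝ => Complex.normSq (ω (Complex.exp ((θ:ℂ) * Complex.I) * z0))) 0 := by
      apply Filter.Eventually.of_forall
      intro θ
      have hn : ‖Complex.exp ((θ:ℂ) * Complex.I) * z0‖ = r0 := by
        rw [norm_mul, Complex.norm_exp_ofReal_mul_I, one_mul]
      have h1 : ‖ω (Complex.exp ((θ:ℂ) * Complex.I) * z0)‖ ≤ 1 :=
        hball _ hn.le
      have h2 : Complex.normSq (ω (Complex.exp ((θ:ℂ) * Complex.I) * z0)) ≤ 1 := by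
        rw [← Complex.sq_norm]
        nlinarith [norm_nonneg (ω (Complex.exp ((θ:ℂ) * Complex.I) * z0))]
      have h3 : Complex.normSq (ω (Complex.exp (((0:ℝ):ℂ) * Complex.I) * z0)) = 1 := by
        simp only [Complex.ofReal_zero, zero_mul, Complex.exp_zero, one_mul]
        rw [← hw, hw2]
      calc (fun θ : ℝ => Complex.normSq (ω (Complex.exp ((θ:ℂ) * Complex.I) * z0))) θ
          = Complex.normSq (ω (Complex.exp ((θ:ℂ) * Complex.I) * z0)) := rfl
        _ ≤ 1 := h2
        _ = Complex.normSq (ω (Complex.exp (((0:ℝ):ℂ) * Complex.I) * z0)) := h3.symm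
        _ = (fun θ : ℝ => Complex.normSq (ω (Complex.exp ((θ:ℂ) * Complex.I) * z0))) 0 := by
            norm_num
    have him0 : c.im = 0 := by
      have heq0 := hΘmax.hasDerivAt_eq_zero hΘd
      have hre0 : ((starRingEnd ℂ) w * ((Complex.I * z0) • dω)).re = -c.im := by
        rw [hc]
        simp only [smul_eq_mul, Complex.mul_re, Complex.mul_im, Complex.I_re, Complex.I_im,
          Complex.conj_re, Complex.conj_im]
        ring
      rw [hre0] at heq0
      linarith [heq0]
    -- final contradiction
    have hexpz0 : Complex.exp (M z0) = 1 + w := hexpM z0 hz0ball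
    have h1w : (1:ℂ) + w ≠ 0 := by rw [← hexpz0]; exact Complex.exp_ne_zero _
    have hwc : w * (starRingEnd ℂ) w = 1 := by
      rw [Complex.mul_conj]; exact_mod_cast hw2
    set ζ := z0 * (((lam:ℝ):ℂ)⁻¹ * (deriv p z0 / p z0)) with hζdef
    have hDζ : z0 * dω = (1 + w) * ζ := by
      rw [hdω, hζdef, hexpz0]; ring
    have hcreal : c = ((c.re : ℝ) : ℂ) := by
      apply Complex.ext
      · simp
      · simp [him0]
    have hζ_eq : ζ = ((c.re : ℝ) : ℂ) * (w / (1 + w)) := by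
      have h1 : w * c = z0 * dω := by
        rw [hc, ← mul_assoc, hwc, one_mul]
      rw [hDζ] at h1
      rw [← hcreal]
      field_simp
      linear_combination -h1
    have hhalf : (w / (1 + w)).re = 1/2 := by
      have hwre : 1 + w.re ≠ 0 := by
        intro h
        have hre1 : w.re = -1 := by linarith
        have him1 : w.im = 0 := by nlinarith
        apply h1w
        apply Complex.ext <;> simp [hre1, him1]
      have hnsq : Complex.normSq (1 + w) = 2 * (1 + w.re) := by
        rw [Complex.normSq_apply]
        simp only [Complex.add_re, Complex.add_im, Complex.one_re, Complex.one_im, zero_add]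
        nlinarith
      rw [Complex.div_re, hnsq]
      simp only [Complex.add_re, Complex.add_im, Complex.one_re, Complex.one_im, zero_add]
      field_simp
      nlinarith
    have hfin : ζ.re = c.re * (1/2) := by
      rw [hζ_eq, Complex.re_ofReal_mul, hhalf]
    have hcontra := hre' z0 hz0ball
    rw [← hζdef] at hcontra
    rw [hfin] at hcontra
    linarith
  -- conclude: Im (M z) stays in (-π/2, π/2)
  have hMcont : ContinuousOn M (ball 0 1) := (hLd.const_mul _).continuousOn
  have hcos : ∀ z ∈ ball (0:ℂ) 1, 0 < Real.cos ((M z).im) := by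
    intro z hz
    have h1 : 0 < (Complex.exp (M z)).re := by
      rw [hexpM z hz]
      have h2 := hmaps z hz
      have h3 : |(ω z).re| ≤ ‖ω z‖ := Complex.abs_re_le_norm _
      have h4 := abs_le.mp h3
      simp only [Complex.add_re, Complex.one_re]
      linarith
    rw [Complex.exp_re] at h1
    nlinarith [Real.exp_pos ((M z).re)]
  have hpre : IsPreconnected ((fun z => (M z).im) '' (ball (0:ℂ) 1)) :=
    ((convex_ball (0:ℂ) 1).isPreconnected).image _
      (Complex.continuous_im.comp_continuousOn hMcont)
  have h0img : (0:ℝ) ∈ (fun z => (M z).im) '' (ball (0:ℂ) 1) :=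
    ⟨0, by simp, by simp [hM0]⟩
  have himlt : ∀ z ∈ ball (0:ℂ) 1, |(M z).im| < Real.pi / 2 := by
    intro z hz
    by_contra hge
    push_neg at hge
    have hoc := hpre.ordConnected
    have hmem : (M z).im ∈ (fun z => (M z).im) '' (ball (0:ℂ) 1) := ⟨z, hz, rfl⟩
    rcases le_abs.mp hge with h | h
    · have hsubm : Set.Icc (0:ℝ) ((M z).im) ⊆ (fun z => (M z).im) '' (ball (0:ℂ) 1) :=
        hoc.out h0img hmem
      obtain ⟨z', hz', hz'eq⟩ := hsubm (show Real.pi/2 ∈ Set.Icc (0:ℝ) ((M z).im) from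
        ⟨(Real.pi_div_two_pos).le, h⟩)
      have hp2 := hcos z' hz'
      have hz'eq' : (M z').im = Real.pi/2 := hz'eq
      rw [hz'eq', Real.cos_pi_div_two] at hp2
      exact lt_irrefl 0 hp2
    · have hsubm : Set.Icc ((M z).im) (0:ℝ) ⊆ (fun z => (M z).im) '' (ball (0:ℂ) 1) :=
        hoc.out hmem h0img
      obtain ⟨z', hz', hz'eq⟩ := hsubm (show -(Real.pi/2) ∈ Set.Icc ((M z).im) (0:ℝ) from
        ⟨by linarith, by linarith [Real.pi_div_two_pos]⟩)
      have hp2 := hcos z' hz'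
      have hz'eq' : (M z').im = -(Real.pi/2) := hz'eq
      rw [hz'eq', Real.cos_neg, Real.cos_pi_div_two] at hp2
      exact lt_irrefl 0 hp2
  refine ⟨1, le_rfl, ω, hωdiff, ?_, hω0, ?_⟩
  · intro z hz
    exact mem_ball_zero_iff.mpr (hmaps z hz)
  · intro z hz
    show p z = Complex.exp (((lam / ((1:ℕ):ℝ) : ℝ) : ℂ) * Complex.log (1 + ω z ^ 1))
    have hlog : Complex.log (1 + ω z ^ 1) = M z := by
      rw [pow_one, show (1:ℂ) + ω z = Complex.exp (M z) from (hexpM z hz).symm]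
      apply Complex.log_exp
      · have h1 := abs_lt.mp (himlt z hz)
        linarith [Real.pi_pos]
      · have h1 := abs_lt.mp (himlt z hz)
        linarith [Real.pi_pos]
    rw [hlog]
    have hcast : ((lam / ((1:ℕ):ℝ) : ℝ) : ℂ) = ((lam:ℝ):ℂ) := by norm_num
    rw [hcast, show M z = ((lam:ℝ):ℂ)⁻¹ * L z from rfl, ← mul_assoc,
      mul_inv_cancel₀ hlamC, one_mul]
    exact (hLexp z hz).symm
end

section
/- Let 0 < λ ≤ 1 and let f ∈ 𝒩(λ). Then for every z ∈ 𝔻 with |z| = r, r(1 − r)^λ ≤ |f(z)| ≤ r(1 + r)^λ. -/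
open Complex Metric Set

private lemma hasDerivAt_log_abs {w : ℝ → ℂ} {w' : ℂ} {t : ℝ}
    (hw : HasDerivAt w w' t) (h0 : w t ≠ 0) :
    HasDerivAt (fun s => Real.log (‖w s‖)) ((w' / w t).re) t := by
  have hre : HasDerivAt (fun s => (w s).re) w'.re t :=
    (Complex.reCLM.hasFDerivAt.comp_hasDerivAt t hw)
  have him : HasDerivAt (fun s => (w s).im) w'.im t :=
    (Complex.imCLM.hasFDerivAt.comp_hasDerivAt t hw)
  have hns : HasDerivAt (fun s => Complex.normSq (w s))
      (w'.re * (w t).re + (w t).re * w'.re + (w'.im * (w t).im + (w t).im * w'.im)) t := by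
    have := (hre.mul hre).add (him.mul him)
    exact this.congr_of_eventuallyEq
      (Filter.Eventually.of_forall fun s => by simp [Complex.normSq_apply])
  have hpos : 0 < Complex.normSq (w t) := Complex.normSq_pos.2 h0
  have h2 := (hns.log hpos.ne').div_const 2
  have heq : (fun s => Real.log (‖w s‖))
      = fun s => Real.log (Complex.normSq (w s)) / 2 := by
    funext s
    rw [Complex.norm_def, Real.log_sqrt (Complex.normSq_nonneg _)]
  rw [heq]
  refine h2.congr_deriv ?_
  rw [Complex.div_re]
  field_simp
  ring

private lemma herglotz {P : ℂ → ℂ} (hP : DifferentiableOn ℂ P (ball 0 1))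
    (hP0 : P 0 = 1) (hRe : ∀ w ∈ ball (0:ℂ) 1, 0 < (P w).re) :
    ∀ w ∈ ball (0:ℂ) 1,
      (1 - ‖w‖) / (1 + ‖w‖) ≤ (P w).re ∧
      ‖P w‖ ≤ (1 + ‖w‖) / (1 - ‖w‖) := by
  have hP1 : ∀ w ∈ ball (0:ℂ) 1, P w + 1 ≠ 0 := by
    intro w hw h
    have h1 : (P w + 1).re = (P w).re + 1 := by simp
    have := hRe w hw
    rw [h] at h1
    simp at h1
    linarith
  set ω : ℂ → ℂ := fun w => (P w - 1) / (P w + 1) with hω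
  have hωd : DifferentiableOn ℂ ω (ball 0 1) :=
    (hP.sub_const 1).div (hP.add_const 1) hP1
  have key : ∀ w ∈ ball (0:ℂ) 1,
      ‖P w - 1‖ ≤ ‖w‖ * ‖P w + 1‖ := by
    intro w hw
    have hmaps : MapsTo ω (ball 0 1) (ball 0 1) := by
      intro v hv
      rw [mem_ball_zero_iff]
      have hlt : ‖P v - 1‖ < ‖P v + 1‖ := by
        have hsq : (‖P v - 1‖)^2 < (‖P v + 1‖)^2 := by
          rw [Complex.sq_norm, Complex.sq_norm, Complex.normSq_apply, Complex.normSq_apply]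
          have := hRe v hv
          simp only [Complex.sub_re, Complex.sub_im, Complex.add_re, Complex.add_im,
            Complex.one_re, Complex.one_im]
          nlinarith
        exact lt_of_pow_lt_pow_left₀ 2 (norm_nonneg _) hsq
      have : ‖ω v‖ = ‖P v - 1‖ / ‖P v + 1‖ := by
        simp [hω, norm_div]
      rw [this]
      rw [div_lt_one (lt_of_le_of_lt (norm_nonneg _) hlt)]
      exact hlt
    have hω0 : ω 0 = 0 := by simp [hω, hP0]
    have := Complex.norm_le_norm_of_mapsTo_ball_self hωd (hmaps.mono_right ball_subset_closedBall) hω0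
      (mem_ball_zero_iff.1 hw)
    have hωw : ‖ω w‖ = ‖P w - 1‖ / ‖P w + 1‖ := by
      simp [hω, norm_div]
    rw [hωw, div_le_iff₀ (by
      have := norm_pos_iff.mpr (hP1 w hw); exact this)] at this
    linarith [this]
  intro w hw
  set s := ‖w‖ with hs
  have hs0 : 0 ≤ s := norm_nonneg w
  have hs1 : s < 1 := by simpa [hs, mem_ball_zero_iff] using hw
  have hk := key w hw
  set a := P w with ha
  have hsq : (a.re - 1)^2 + a.im^2 ≤ s^2 * ((a.re + 1)^2 + a.im^2) := by
    have e1 : (a.re - 1)^2 + a.im^2 = (‖a - 1‖)^2 := by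
      rw [Complex.sq_norm, Complex.normSq_apply]
      simp [Complex.sub_re, Complex.sub_im]
      ring
    have e2 : (a.re + 1)^2 + a.im^2 = (‖a + 1‖)^2 := by
      rw [Complex.sq_norm, Complex.normSq_apply]
      simp [Complex.add_re, Complex.add_im]
      ring
    have h3 := mul_self_le_mul_self (norm_nonneg (a - 1)) hk
    rw [e1, e2]
    nlinarith [norm_nonneg (a + 1), norm_nonneg (a - 1)]
  have hxpos : 0 < a.re := hRe w hw
  have hxm : a.re ≤ ‖a‖ := Complex.re_le_norm a
  have hm0 : 0 ≤ ‖a‖ := norm_nonneg a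
  have hm2 : (‖a‖)^2 = a.re^2 + a.im^2 := by
    rw [Complex.sq_norm, Complex.normSq_apply]; ring
  have hs2 : 0 ≤ 1 - s^2 := by nlinarith
  constructor
  · rw [div_le_iff₀ (by linarith)]
    by_contra hcon
    push_neg at hcon
    have hp1 : 0 < (1 - s) - (1 + s) * a.re := by linarith [mul_comm a.re (1 + s)]
    have hx1 : a.re < 1 := by nlinarith
    have hp2 : 0 < (1 + s) - (1 - s) * a.re := by nlinarith
    have hprod := mul_pos hp1 hp2
    nlinarith [mul_nonneg hs2 (sq_nonneg a.im)]
  · rw [le_div_iff₀ (by linarith)]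
    by_contra hcon
    push_neg at hcon
    have hp1 : 0 < (1 - s) * ‖a‖ - (1 + s) := by nlinarith
    have hm1 : 1 < ‖a‖ := by nlinarith
    have hp2 : 0 < (1 + s) * ‖a‖ - (1 - s) := by nlinarith
    have hprod := mul_pos hp1 hp2
    nlinarith [mul_nonneg (mul_nonneg hs2 hs2) (sq_nonneg a.im),
      mul_nonneg (by positivity : (0:ℝ) ≤ 1 + s^2) (sub_nonneg.2 hxm)]

/-- growth theorem in 𝒩(λ): if `0 < λ ≤ 1` and `f ∈ 𝒩(λ)`, then for every
`z ∈ 𝔻` with `|z| = r` one has `r (1−r)^λ ≤ |f z| ≤ r (1+r)^λ`. -/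
theorem stmt8 (lam : ℝ) (hlam0 : 0 < lam) (hlam1 : lam ≤ 1)
    (f : ℂ → ℂ)
    (hf : DifferentiableOn ℂ f (ball 0 1))
    (hf0 : f 0 = 0) (hfd0 : deriv f 0 = 1)
    (hfne : ∀ z ∈ ball (0:ℂ) 1, z ≠ 0 → f z ≠ 0)
    (hN : ∀ z ∈ ball (0:ℂ) 1, (z * deriv f z / f z).re < 1 + lam / 2) :
    ∀ z ∈ ball (0:ℂ) 1, ∀ r : ℝ, ‖z‖ = r →
      r * (1 - r) ^ lam ≤ ‖f z‖ ∧
      ‖f z‖ ≤ r * (1 + r) ^ lam := by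
  intro z hz r hr
  subst hr
  rcases eq_or_ne z 0 with rfl | hzne
  · simp [hf0]
  have hball : IsOpen (ball (0:ℂ) 1) := isOpen_ball
  have hmem0 : (0:ℂ) ∈ ball (0:ℂ) 1 := by simp
  set g := dslope f 0 with hgdef
  have hgd : DifferentiableOn ℂ g (ball 0 1) := by
    intro w hw
    rcases eq_or_ne w 0 with rfl | hne
    · have hfa : AnalyticAt ℂ f 0 := hf.analyticAt (hball.mem_nhds hmem0)
      rcases hfa with ⟨p, hp⟩
      exact hp.has_fpower_series_dslope_fslope.analyticAt.differentiableAt.differentiableWithinAt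
    · exact (differentiableWithinAt_dslope_of_ne hne).2 (hf w hw)
  have hg0 : g 0 = 1 := by rw [hgdef, dslope_same, hfd0]
  have hfeq : ∀ u : ℂ, f u = u * g u := by
    intro u
    have h := sub_smul_dslope f 0 u
    rw [hf0, sub_zero, sub_zero, smul_eq_mul] at h
    exact h.symm
  have hgne : ∀ w ∈ ball (0:ℂ) 1, g w ≠ 0 := by
    intro w hw
    rcases eq_or_ne w 0 with rfl | hne
    · rw [hg0]; exact one_ne_zero
    · intro h
      have h2 := hfne w hw hne
      rw [hfeq w, h, mul_zero] at h2
      exact h2 rfl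
  have hgda : ∀ w ∈ ball (0:ℂ) 1, DifferentiableAt ℂ g w := fun w hw =>
    (hgd w hw).differentiableAt (hball.mem_nhds hw)
  have hderiv : ∀ w ∈ ball (0:ℂ) 1, deriv f w = g w + w * deriv g w := by
    intro w hw
    have h1 : HasDerivAt (fun u => u * g u) (1 * g w + w * deriv g w) w :=
      (hasDerivAt_id w).mul (hgda w hw).hasDerivAt
    have h2 : deriv f w = deriv (fun u => u * g u) w := by
      congr 1
      funext u
      exact hfeq u
    rw [h2, h1.deriv]
    ring
  have hq : ∀ w ∈ ball (0:ℂ) 1, (w * deriv g w / g w).re < lam / 2 := by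
    intro w hw
    rcases eq_or_ne w 0 with rfl | hne
    · simpa using hlam0
    · have hN' := hN w hw
      have heq : w * deriv f w / f w = 1 + w * deriv g w / g w := by
        rw [hderiv w hw, hfeq w]
        field_simp [hne, hgne w hw]
      rw [heq] at hN'
      simp only [Complex.add_re, Complex.one_re] at hN'
      linarith
  set P : ℂ → ℂ := fun w => 1 - ((2 / lam : ℝ) : ℂ) * (w * deriv g w / g w) with hPdef
  have hPre : ∀ w : ℂ, (P w).re = 1 - (2 / lam) * (w * deriv g w / g w).re := by
    intro w
    simp [hPdef, Complex.mul_re]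
  have hP0 : P 0 = 1 := by simp [hPdef]
  have hPpos : ∀ w ∈ ball (0:ℂ) 1, 0 < (P w).re := by
    intro w hw
    rw [hPre w]
    have h1 := hq w hw
    have h2 : (2 / lam) * (w * deriv g w / g w).re < (2 / lam) * (lam / 2) :=
      mul_lt_mul_of_pos_left h1 (by positivity)
    have h3 : (2 / lam) * (lam / 2) = 1 := by field_simp
    linarith
  have hdg : DifferentiableOn ℂ (deriv g) (ball 0 1) :=
    ((hgd.analyticOnNhd hball).deriv).differentiableOn
  have hPd : DifferentiableOn ℂ P (ball 0 1) := by
    have h1 : DifferentiableOn ℂ (fun w => w * deriv g w / g w) (ball 0 1) :=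
      (differentiableOn_id.mul hdg).div hgd hgne
    exact (h1.const_mul _).const_sub 1
  have hH := herglotz hPd hP0 hPpos
  set r := ‖z‖ with hrdef
  have hr0 : 0 < r := norm_pos_iff.mpr hzne
  have hr1 : r < 1 := mem_ball_zero_iff.1 hz
  have hmem : ∀ t : ℝ, t ∈ Icc (0:ℝ) 1 → ((t:ℂ) * z) ∈ ball (0:ℂ) 1 := by
    intro t ht
    rw [mem_ball_zero_iff, norm_mul, Complex.norm_real, Real.norm_eq_abs,
      _root_.abs_of_nonneg ht.1, ← hrdef]
    nlinarith [ht.2]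
  have habs : ∀ t : ℝ, 0 ≤ t → ‖(t:ℂ) * z‖ = t * r := by
    intro t ht
    rw [norm_mul, Complex.norm_real, Real.norm_eq_abs, _root_.abs_of_nonneg ht, hrdef]
  set ψ : ℝ → ℝ := fun t => Real.log (‖g ((t:ℂ) * z)‖) with hψdef
  set φ : ℝ → ℝ := fun t => (deriv g ((t:ℂ) * z) * z / g ((t:ℂ) * z)).re with hφdef
  have hψd : ∀ t ∈ Icc (0:ℝ) 1, HasDerivAt ψ (φ t) t := by
    intro t ht
    have hmemt := hmem t ht
    have h1 : HasDerivAt g (deriv g ((t:ℂ) * z)) ((t:ℂ) * z) := (hgda _ hmemt).hasDerivAt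
    have h2 : HasDerivAt (fun u : ℂ => g (u * z)) (deriv g ((t:ℂ) * z) * z) (t:ℂ) := by
      have h3 := h1.comp (t:ℂ) ((hasDerivAt_id (t:ℂ)).mul_const z)
      exact h3.congr_deriv (by ring)
    exact hasDerivAt_log_abs h2.comp_ofReal (hgne _ hmemt)
  have hφub : ∀ t ∈ Ioo (0:ℝ) 1, φ t ≤ lam * r / (1 + t * r) := by
    intro t ht
    have ht' : t ∈ Icc (0:ℝ) 1 := ⟨ht.1.le, ht.2.le⟩
    have hmemt := hmem t ht'
    have hs := habs t ht.1.le
    have hre : ((t:ℂ) * z * deriv g ((t:ℂ) * z) / g ((t:ℂ) * z)).re = t * φ t := by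
      have : (t:ℂ) * z * deriv g ((t:ℂ) * z) / g ((t:ℂ) * z)
          = (t:ℂ) * (deriv g ((t:ℂ) * z) * z / g ((t:ℂ) * z)) := by ring
      rw [this]
      simp [hφdef, Complex.mul_re]
    have hPw := (hH _ hmemt).1
    rw [hs] at hPw
    have hqre : ((t:ℂ) * z * deriv g ((t:ℂ) * z) / g ((t:ℂ) * z)).re
        = (lam / 2) * (1 - (P ((t:ℂ) * z)).re) := by
      rw [hPre]
      field_simp
      ring
    have h1tr : 0 < 1 + t * r := by nlinarith [ht.1, hr0]
    have hb : t * φ t ≤ (lam / 2) * (1 - (1 - t * r) / (1 + t * r)) := by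
      rw [← hre, hqre]
      have := mul_le_mul_of_nonneg_left hPw (by positivity : (0:ℝ) ≤ lam / 2)
      linarith
    have hb2 : (lam / 2) * (1 - (1 - t * r) / (1 + t * r)) = t * (lam * r / (1 + t * r)) := by
      field_simp
      ring
    rw [hb2] at hb
    exact le_of_mul_le_mul_left (by linarith [hb]) ht.1
  have hφlb : ∀ t ∈ Ioo (0:ℝ) 1, -(lam * r / (1 - t * r)) ≤ φ t := by
    intro t ht
    have ht' : t ∈ Icc (0:ℝ) 1 := ⟨ht.1.le, ht.2.le⟩
    have hmemt := hmem t ht'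
    have hs := habs t ht.1.le
    have hre : ((t:ℂ) * z * deriv g ((t:ℂ) * z) / g ((t:ℂ) * z)).re = t * φ t := by
      have : (t:ℂ) * z * deriv g ((t:ℂ) * z) / g ((t:ℂ) * z)
          = (t:ℂ) * (deriv g ((t:ℂ) * z) * z / g ((t:ℂ) * z)) := by ring
      rw [this]
      simp [hφdef, Complex.mul_re]
    have hPw := ((hH _ hmemt).2)
    rw [hs] at hPw
    have hPw2 : (P ((t:ℂ) * z)).re ≤ (1 + t * r) / (1 - t * r) :=
      le_trans (Complex.re_le_norm _) hPw
    have hqre : ((t:ℂ) * z * deriv g ((t:ℂ) * z) / g ((t:ℂ) * z)).re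
        = (lam / 2) * (1 - (P ((t:ℂ) * z)).re) := by
      rw [hPre]
      field_simp
      ring
    have h1tr : 0 < 1 - t * r := by nlinarith [ht.2, hr1, hr0, ht.1]
    have hb : (lam / 2) * (1 - (1 + t * r) / (1 - t * r)) ≤ t * φ t := by
      rw [← hre, hqre]
      have := mul_le_mul_of_nonneg_left hPw2 (by positivity : (0:ℝ) ≤ lam / 2)
      linarith
    have hb2 : (lam / 2) * (1 - (1 + t * r) / (1 - t * r)) = t * (-(lam * r / (1 - t * r))) := by
      field_simp
      ring
    rw [hb2] at hb
    exact le_of_mul_le_mul_left (by linarith [hb]) ht.1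
  have h1tr : ∀ t ∈ Icc (0:ℝ) 1, 0 < 1 + t * r := by
    intro t ht
    nlinarith [ht.1, hr0]
  have h1tr' : ∀ t ∈ Icc (0:ℝ) 1, 0 < 1 - t * r := by
    intro t ht
    nlinarith [ht.2, hr1, hr0, ht.1]
  -- upper bound
  have hA : ∀ t ∈ Icc (0:ℝ) 1,
      HasDerivAt (fun t : ℝ => lam * Real.log (1 + t * r) - ψ t)
        (lam * (r / (1 + t * r)) - φ t) t := by
    intro t ht
    have h1 : HasDerivAt (fun t : ℝ => 1 + t * r) r t := by
      simpa using ((hasDerivAt_id t).mul_const r).const_add 1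
    exact (((h1.log (h1tr t ht).ne').const_mul lam)).sub (hψd t ht)
  have hB : ∀ t ∈ Icc (0:ℝ) 1,
      HasDerivAt (fun t : ℝ => ψ t - lam * Real.log (1 - t * r))
        (φ t - lam * (-r / (1 - t * r))) t := by
    intro t ht
    have h1 : HasDerivAt (fun t : ℝ => 1 - t * r) (-r) t := by
      simpa using ((hasDerivAt_id t).mul_const r).const_sub 1
    exact (hψd t ht).sub ((h1.log (h1tr' t ht).ne').const_mul lam)
  have hmono : ∀ (F : ℝ → ℝ) (F' : ℝ → ℝ), (∀ t ∈ Icc (0:ℝ) 1, HasDerivAt F (F' t) t) →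
      (∀ t ∈ Ioo (0:ℝ) 1, 0 ≤ F' t) → F 0 ≤ F 1 := by
    intro F F' hF hF'
    have := monotoneOn_of_deriv_nonneg (convex_Icc 0 1)
      (fun t ht => (hF t ht).continuousAt.continuousWithinAt)
      (fun t ht => by
        rw [interior_Icc] at ht
        exact (hF t ⟨ht.1.le, ht.2.le⟩).differentiableAt.differentiableWithinAt)
      (fun t ht => by
        rw [interior_Icc] at ht
        rw [(hF t ⟨ht.1.le, ht.2.le⟩).deriv]
        exact hF' t ht)
    exact this (by norm_num) (by norm_num) (by norm_num)
  have hub : ψ 1 ≤ lam * Real.log (1 + r) := by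
    have := hmono _ _ hA (fun t ht => by
      have := hφub t ht
      have h2 : lam * (r / (1 + t * r)) = lam * r / (1 + t * r) := by ring
      linarith [h2 ▸ this])
    have hψ0 : ψ 0 = 0 := by simp [hψdef, hg0]
    simp only [hψ0] at this
    norm_num at this
    linarith
  have hlb : lam * Real.log (1 - r) ≤ ψ 1 := by
    have := hmono _ _ hB (fun t ht => by
      have h1 := hφlb t ht
      have h2 : lam * (-r / (1 - t * r)) = -(lam * r / (1 - t * r)) := by ring
      rw [h2]
      linarith)
    have hψ0 : ψ 0 = 0 := by simp [hψdef, hg0]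
    simp only [hψ0] at this
    norm_num at this
    linarith
  have hψ1 : ψ 1 = Real.log (‖g z‖) := by simp [hψdef]
  have hgz : 0 < ‖g z‖ := norm_pos_iff.mpr (hgne z hz)
  have hfz : ‖f z‖ = r * ‖g z‖ := by
    rw [hfeq z, norm_mul, hrdef]
  rw [hψ1] at hub hlb
  constructor
  · rw [hfz]
    have h1 : (1 - r) ^ lam = Real.exp (lam * Real.log (1 - r)) := by
      rw [Real.rpow_def_of_pos (by linarith), mul_comm]
    rw [h1]
    have h2 : Real.exp (lam * Real.log (1 - r)) ≤ ‖g z‖ := by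
      calc Real.exp (lam * Real.log (1 - r)) ≤ Real.exp (Real.log (‖g z‖)) :=
            Real.exp_le_exp.2 hlb
        _ = ‖g z‖ := Real.exp_log hgz
    exact mul_le_mul_of_nonneg_left h2 hr0.le
  · rw [hfz]
    have h1 : (1 + r) ^ lam = Real.exp (lam * Real.log (1 + r)) := by
      rw [Real.rpow_def_of_pos (by linarith), mul_comm]
    rw [h1]
    have h2 : ‖g z‖ ≤ Real.exp (lam * Real.log (1 + r)) := by
      calc ‖g z‖ = Real.exp (Real.log (‖g z‖)) := (Real.exp_log hgz).symm
        _ ≤ Real.exp (lam * Real.log (1 + r)) := Real.exp_le_exp.2 hub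
    exact mul_le_mul_of_nonneg_left h2 hr0.le
end

section
/- Let 0 < λ ≤ 1 and let f ∈ 𝒩(λ). Then for every z ∈ 𝔻 \ {0} with |z| = r, |arg(f(z)/z)| ≤ λ arcsin(r), where arg denotes the principal argument. -/
open Complex Metric Set intervalIntegral

noncomputable section

local notation "π" => Real.pi



lemma rot_im_le (w : ℂ) : |w.im| ≤ ‖w‖ * ‖1 - w‖ := by
  have h1 : (‖w‖)^2 = w.re^2 + w.im^2 := by
    rw [Complex.sq_norm, Complex.normSq_apply]; ring
  have h2 : (‖1-w‖)^2 = (1 - w.re)^2 + w.im^2 := by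
    rw [Complex.sq_norm, Complex.normSq_apply]; simp [Complex.sub_re, Complex.sub_im]; ring
  have hsq : |w.im|^2 ≤ (‖w‖ * ‖1 - w‖)^2 := by
    rw [_root_.sq_abs, mul_pow, h1, h2]
    nlinarith [sq_nonneg (w.re - (w.re^2 + w.im^2))]
  have h0 : (0:ℝ) ≤ ‖w‖ * ‖1 - w‖ :=
    mul_nonneg (norm_nonneg _) (norm_nonneg _)
  exact (pow_le_pow_iff_left₀ (abs_nonneg _) h0 two_ne_zero).1 hsq

lemma rot_arg_le {w : ℂ} (hw : ‖w‖ < 1) :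
    |(Complex.log (1 - w)).im| ≤ Real.arcsin (‖w‖) := by
  have hre : 0 < (1 - w).re := by
    have := Complex.re_le_norm w
    simp only [Complex.sub_re, Complex.one_re]
    linarith
  have hne : (1 - w) ≠ 0 := by
    intro h; rw [h] at hre; simp at hre
  have habs : 0 < ‖1 - w‖ := norm_pos_iff.mpr hne
  rw [Complex.log_im, Complex.arg_of_re_nonneg hre.le]
  set x := (1 - w).im / ‖1 - w‖ with hx
  have hxw : |x| ≤ ‖w‖ := by
    rw [hx, abs_div, abs_of_pos habs, div_le_iff₀ habs]
    have : (1 - w).im = -w.im := by simp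
    rw [this, abs_neg]
    exact rot_im_le w
  have hup : Real.arcsin x ≤ Real.arcsin (‖w‖) :=
    Real.monotone_arcsin (le_of_abs_le hxw)
  have hlo : -Real.arcsin (‖w‖) ≤ Real.arcsin x := by
    rw [← Real.arcsin_neg]
    exact Real.monotone_arcsin (neg_le_of_abs_le hxw)
  exact abs_le.mpr ⟨hlo, hup⟩




lemma circ_eq (R : ℝ) (hR0 : 0 < R) (F : ℂ → ℂ) :
    (∮ z in C(0, R), z⁻¹ * F z) = I * ∫ θ in (0:ℝ)..2*π, F (circleMap 0 R θ) := by
  rw [circleIntegral]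
  have h : ∀ θ : ℝ, deriv (circleMap 0 R) θ • ((circleMap 0 R θ)⁻¹ * F (circleMap 0 R θ))
       = I * F (circleMap 0 R θ) := by
    intro θ
    have hne : circleMap 0 R θ ≠ 0 := circleMap_ne_center hR0.ne'
    rw [deriv_circleMap, smul_eq_mul]
    field_simp
  simp_rw [h]
  rw [intervalIntegral.integral_const_mul]

variable {P : ℂ → ℂ} {R : ℝ}

lemma sphere_ne_zero (hR0 : 0 < R) {z : ℂ} (hz : z ∈ sphere (0:ℂ) R) : z ≠ 0 := by
  intro h; rw [mem_sphere_iff_norm, h] at hz; simp at hz; linarith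

lemma sphere_ne_w (hR0 : 0 < R) {z w : ℂ} (hw : ‖w‖ < R)
    (hz : z ∈ sphere (0:ℂ) R) : z - w ≠ 0 := by
  rw [mem_sphere_iff_norm, sub_zero] at hz
  intro h
  rw [sub_eq_zero] at h
  rw [h] at hz
  linarith

lemma contP_circ (hP : DifferentiableOn ℂ P (ball 0 1)) (hR0 : 0 < R) (hR1 : R < 1) :
    Continuous fun θ : ℝ => P (circleMap 0 R θ) := by
  apply hP.continuousOn.comp_continuous (continuous_circleMap 0 R)
  intro θ
  rw [mem_ball_zero_iff, norm_circleMap_zero, abs_of_pos hR0]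
  exact hR1

lemma contW_circ (hR0 : 0 < R) {w : ℂ} (hw : ‖w‖ < R) :
    Continuous fun θ : ℝ => w * (circleMap 0 R θ - w)⁻¹ := by
  apply continuous_const.mul
  apply Continuous.inv₀ ((continuous_circleMap 0 R).sub continuous_const)
  intro θ
  exact sphere_ne_w hR0 hw (circleMap_mem_sphere 0 hR0.le θ)

lemma cauchyP (hP : DifferentiableOn ℂ P (ball 0 1)) (hR0 : 0 < R) (hR1 : R < 1)
    {w : ℂ} (hw : ‖w‖ < R) :
    (∮ z in C(0, R), (z - w)⁻¹ * P z) = 2 * π * I * P w := by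
  have hd : DiffContOnCl ℂ P (ball 0 R) := by
    constructor
    · exact hP.mono (ball_subset_ball hR1.le)
    · refine hP.continuousOn.mono ?_
      rw [closure_ball (0:ℂ) hR0.ne']
      exact (closedBall_subset_ball hR1)
  have hwm : w ∈ ball (0:ℂ) R := by
    rw [mem_ball_zero_iff]; exact hw
  have := hd.circleIntegral_sub_inv_smul hwm
  simpa [smul_eq_mul, mul_assoc] using this

-- E4
lemma E4 (hP : DifferentiableOn ℂ P (ball 0 1)) (hR0 : 0 < R) (hR1 : R < 1) :
    ∫ θ in (0:ℝ)..2*π, P (circleMap 0 R θ) = 2 * π * P 0 := by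
  have h1 := circ_eq R hR0 P
  have h2 : (∮ z in C(0, R), z⁻¹ * P z) = 2 * π * I * P 0 := by
    have := cauchyP hP hR0 hR1 (w := 0) (by simpa using hR0)
    simpa using this
  rw [h2] at h1
  apply mul_left_cancel₀ I_ne_zero
  rw [← h1]; ring

-- E1
lemma E1 (hR0 : 0 < R) {w : ℂ} (hw : ‖w‖ < R) :
    ∫ θ in (0:ℝ)..2*π, w * (circleMap 0 R θ - w)⁻¹ = 0 := by
  rcases eq_or_ne w 0 with rfl | hw0
  · simp
  have h1 := circ_eq R hR0 (fun z => w * (z - w)⁻¹)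
  have hwm : w ∈ ball (0:ℂ) R := by
    rw [mem_ball_zero_iff]; exact hw
  have hcongr : EqOn (fun z : ℂ => z⁻¹ * (w * (z - w)⁻¹))
      (fun z : ℂ => (z - w)⁻¹ - (z - 0)⁻¹) (sphere 0 R) := by
    intro z hz
    have h0 := sphere_ne_zero hR0 hz
    have hzw := sphere_ne_w hR0 hw hz
    field_simp
    try ring
    try tauto
  have hint1 : CircleIntegrable (fun z : ℂ => (z - w)⁻¹) 0 R := by
    rw [circleIntegrable_sub_inv_iff]
    right
    intro h
    rw [mem_sphere_iff_norm, sub_zero, abs_of_pos hR0] at h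
    linarith
  have hint2 : CircleIntegrable (fun z : ℂ => (z - 0)⁻¹) 0 R := by
    rw [circleIntegrable_sub_inv_iff]
    right
    intro h
    rw [mem_sphere_iff_norm, sub_zero, abs_of_pos hR0] at h
    simp at h
    linarith
  have h2 : (∮ z in C(0, R), z⁻¹ * (w * (z - w)⁻¹)) = 0 := by
    rw [circleIntegral.integral_congr hR0.le hcongr,
      circleIntegral.integral_sub hint1 hint2,
      circleIntegral.integral_sub_inv_of_mem_ball hwm,
      circleIntegral.integral_sub_inv_of_mem_ball (by simpa using hR0 : (0:ℂ) ∈ ball (0:ℂ) R)]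
    ring
  rw [h2] at h1
  have := h1.symm
  rcases mul_eq_zero.1 this with h | h
  · exact absurd h I_ne_zero
  · exact h

-- E2
lemma E2 (hP : DifferentiableOn ℂ P (ball 0 1)) (hR0 : 0 < R) (hR1 : R < 1)
    {w : ℂ} (hw : ‖w‖ < R) :
    ∫ θ in (0:ℝ)..2*π, P (circleMap 0 R θ) * (w * (circleMap 0 R θ - w)⁻¹)
      = 2 * π * (P w - P 0) := by
  rcases eq_or_ne w 0 with rfl | hw0
  · simp
  have h1 := circ_eq R hR0 (fun z => P z * (w * (z - w)⁻¹))
  have hcongr : EqOn (fun z : ℂ => z⁻¹ * (P z * (w * (z - w)⁻¹)))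
      (fun z : ℂ => (z - w)⁻¹ * P z - (z - 0)⁻¹ * P z) (sphere 0 R) := by
    intro z hz
    have h0 := sphere_ne_zero hR0 hz
    have hzw := sphere_ne_w hR0 hw hz
    field_simp
    ring
  have hPcont : ContinuousOn P (sphere 0 R) := by
    refine hP.continuousOn.mono ?_
    exact sphere_subset_closedBall.trans (closedBall_subset_ball hR1)
  have hint1 : CircleIntegrable (fun z : ℂ => (z - w)⁻¹ * P z) 0 R := by
    apply ContinuousOn.circleIntegrable hR0.le
    exact (((continuousOn_id.sub continuousOn_const).inv₀
      (fun z hz => sphere_ne_w hR0 hw hz)).mul hPcont)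
  have hint2 : CircleIntegrable (fun z : ℂ => (z - 0)⁻¹ * P z) 0 R := by
    apply ContinuousOn.circleIntegrable hR0.le
    refine (((continuousOn_id.sub continuousOn_const).inv₀
      (fun z hz => ?_)).mul hPcont)
    show z - 0 ≠ 0; rw [sub_zero]
    exact sphere_ne_zero hR0 hz
  have h2 : (∮ z in C(0, R), z⁻¹ * (P z * (w * (z - w)⁻¹)))
      = 2 * π * I * P w - 2 * π * I * P 0 := by
    rw [circleIntegral.integral_congr hR0.le hcongr,
      circleIntegral.integral_sub hint1 hint2]
    rw [cauchyP hP hR0 hR1 hw]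
    have := cauchyP hP hR0 hR1 (w := 0) (by simpa using hR0)
    simp only [sub_zero] at this ⊢
    rw [this]
  rw [h2] at h1
  apply mul_left_cancel₀ I_ne_zero
  rw [← h1]; ring

lemma conj_intervalIntegral (a b : ℝ) (u : ℝ → ℂ) :
    ∫ θ in a..b, (starRingEnd ℂ) (u θ) = (starRingEnd ℂ) (∫ θ in a..b, u θ) := by
  simp only [intervalIntegral]
  rw [integral_conj, integral_conj]
  exact (map_sub (starRingEnd ℂ) _ _).symm

lemma re_intervalIntegral (a b : ℝ) (u : ℝ → ℂ) (hu : Continuous u) :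
    ∫ θ in a..b, (u θ).re = (∫ θ in a..b, u θ).re := by
  simp only [intervalIntegral, ← Complex.reCLM_apply]
  rw [ContinuousLinearMap.integral_comp_comm _ hu.integrableOn_Ioc,
    ContinuousLinearMap.integral_comp_comm _ hu.integrableOn_Ioc, map_sub]

-- E3
lemma E3 (hP : DifferentiableOn ℂ P (ball 0 1)) (hR0 : 0 < R) (hR1 : R < 1)
    {w : ℂ} (hw : ‖w‖ < R) :
    ∫ θ in (0:ℝ)..2*π, (starRingEnd ℂ) (P (circleMap 0 R θ))
      * (w * (circleMap 0 R θ - w)⁻¹) = 0 := by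
  set G : ℝ → ℂ := fun θ => P (circleMap 0 R θ) *
    ((starRingEnd ℂ) w * circleMap 0 R θ * (((R:ℂ))^2 - (starRingEnd ℂ) w * circleMap 0 R θ)⁻¹)
    with hG
  -- pointwise : integrand = conj (G θ)
  have hpt : ∀ θ : ℝ, (starRingEnd ℂ) (P (circleMap 0 R θ)) * (w * (circleMap 0 R θ - w)⁻¹)
      = (starRingEnd ℂ) (G θ) := by
    have key : ∀ c X : ℂ, c ≠ 0 → ‖c‖ = R →
        (starRingEnd ℂ) X * (w * (c - w)⁻¹)
          = (starRingEnd ℂ) (X * ((starRingEnd ℂ) w * c * (((R:ℂ))^2 - (starRingEnd ℂ) w * c)⁻¹)) := by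
      intro c X hcne habs
      have hcc : ((R:ℂ))^2 = c * (starRingEnd ℂ) c := by
        rw [Complex.mul_conj, Complex.normSq_eq_norm_sq, habs]; push_cast; ring
      have hconjc : (starRingEnd ℂ) c ≠ 0 := by simpa using hcne
      have hcwne : c - w ≠ 0 := by
        intro h; rw [sub_eq_zero] at h; rw [← h] at hw; rw [habs] at hw; linarith
      simp only [map_mul, map_inv₀, map_sub, map_pow, Complex.conj_conj, Complex.conj_ofReal]
      rw [hcc]
      congr 1
      rw [show c * (starRingEnd ℂ) c - w * (starRingEnd ℂ) c = (c - w) * (starRingEnd ℂ) c by ring,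
        mul_inv]
      field_simp
    intro θ
    exact key _ _ (circleMap_ne_center hR0.ne')
      (by rw [norm_circleMap_zero, abs_of_pos hR0])
  -- G integral is zero
  have hGzero : (∫ θ in (0:ℝ)..2*π, G θ) = 0 := by
    have h1 := circ_eq R hR0 (fun z => P z *
      ((starRingEnd ℂ) w * z * (((R:ℂ))^2 - (starRingEnd ℂ) w * z)⁻¹))
    have hdenne : ∀ z : ℂ, ‖z‖ ≤ R → ((R:ℂ))^2 - (starRingEnd ℂ) w * z ≠ 0 := by
      intro z hz h
      rw [sub_eq_zero] at h
      have := congrArg norm h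
      rw [norm_pow, Complex.norm_real, Real.norm_eq_abs, abs_of_pos hR0, norm_mul, Complex.norm_conj] at this
      nlinarith [norm_nonneg z, norm_nonneg w]
    have hcongr : EqOn (fun z : ℂ => z⁻¹ * (P z *
        ((starRingEnd ℂ) w * z * (((R:ℂ))^2 - (starRingEnd ℂ) w * z)⁻¹)))
        (fun z : ℂ => P z * ((starRingEnd ℂ) w * (((R:ℂ))^2 - (starRingEnd ℂ) w * z)⁻¹))
        (sphere 0 R) := by
      intro z hz
      have h0 := sphere_ne_zero hR0 hz
      have hd : ((R:ℂ))^2 - (starRingEnd ℂ) w * z ≠ 0 := by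
        apply hdenne
        rw [mem_sphere_iff_norm, sub_zero] at hz
        rw [hz]
      field_simp
    have hPcont : ContinuousOn P (closedBall 0 R) :=
      hP.continuousOn.mono (closedBall_subset_ball hR1)
    have hzero : (∮ z in C(0, R), P z * ((starRingEnd ℂ) w
        * (((R:ℂ))^2 - (starRingEnd ℂ) w * z)⁻¹)) = 0 := by
      apply Complex.circleIntegral_eq_zero_of_differentiable_on_off_countable hR0.le
        Set.countable_empty
      · apply hPcont.mul
        apply ContinuousOn.mul continuousOn_const
        apply ContinuousOn.inv₀ (continuousOn_const.sub (continuousOn_const.mul continuousOn_id))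
        intro z hz
        apply hdenne
        rw [mem_closedBall_zero_iff] at hz
        exact hz
      · intro z hz
        have hzb : z ∈ ball (0:ℂ) 1 := ball_subset_ball hR1.le hz.1
        have hd1 : DifferentiableAt ℂ P z := hP.differentiableAt (isOpen_ball.mem_nhds hzb)
        apply hd1.mul
        apply DifferentiableAt.mul (differentiableAt_const _)
        apply DifferentiableAt.inv ((differentiableAt_const _).sub
          ((differentiableAt_const _).mul differentiableAt_id))
        have hz1 : ‖z‖ ≤ R := by
          have h2 := hz.1
          rw [mem_ball_zero_iff] at h2
          exact h2.le
        simpa using hdenne z hz1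
    rw [circleIntegral.integral_congr hR0.le hcongr, hzero] at h1
    have := h1.symm
    rcases mul_eq_zero.1 (by rw [← this] : I * (∫ θ in (0:ℝ)..2*π, G θ) = 0) with h | h
    · exact absurd h I_ne_zero
    · exact h
  calc ∫ θ in (0:ℝ)..2*π, (starRingEnd ℂ) (P (circleMap 0 R θ)) * (w * (circleMap 0 R θ - w)⁻¹)
      = ∫ θ in (0:ℝ)..2*π, (starRingEnd ℂ) (G θ) := by
        apply intervalIntegral.integral_congr
        intro θ _
        exact hpt θ
    _ = (starRingEnd ℂ) (∫ θ in (0:ℝ)..2*π, G θ) := conj_intervalIntegral _ _ _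
    _ = 0 := by rw [hGzero]; simp

lemma herglotz_s9 (lam : ℝ) (hP : DifferentiableOn ℂ P (ball 0 1)) (hP0 : P 0 = 0)
    (hR0 : 0 < R) (hR1 : R < 1) {w : ℂ} (hw : ‖w‖ < R) :
    ∫ θ in (0:ℝ)..2*π, ((lam/2 - (P (circleMap 0 R θ)).re : ℝ) : ℂ)
        * (w * (circleMap 0 R θ - w)⁻¹)
      = -(π:ℂ) * P w := by
  have contP := contP_circ hP hR0 hR1
  have contW := contW_circ hR0 hw
  have hpt : ∀ θ : ℝ, ((lam/2 - (P (circleMap 0 R θ)).re : ℝ) : ℂ)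
        * (w * (circleMap 0 R θ - w)⁻¹)
      = (lam/2 : ℂ) * (w * (circleMap 0 R θ - w)⁻¹)
        - (1/2 : ℂ) * (P (circleMap 0 R θ) * (w * (circleMap 0 R θ - w)⁻¹))
        - (1/2 : ℂ) * ((starRingEnd ℂ) (P (circleMap 0 R θ))
            * (w * (circleMap 0 R θ - w)⁻¹)) := by
    intro θ
    have hre : ((((P (circleMap 0 R θ)).re : ℝ)) : ℂ)
        = (P (circleMap 0 R θ) + (starRingEnd ℂ) (P (circleMap 0 R θ)))/2 := by
      rw [Complex.add_conj]; push_cast; ring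
    push_cast
    rw [hre]
    ring
  have i1 : IntervalIntegrable (fun θ => (lam/2 : ℂ) * (w * (circleMap 0 R θ - w)⁻¹))
      MeasureTheory.volume 0 (2*π) := (continuous_const.mul contW).intervalIntegrable _ _
  have i2 : IntervalIntegrable
      (fun θ => (1/2 : ℂ) * (P (circleMap 0 R θ) * (w * (circleMap 0 R θ - w)⁻¹)))
      MeasureTheory.volume 0 (2*π) :=
    (continuous_const.mul (contP.mul contW)).intervalIntegrable _ _
  have i3 : IntervalIntegrable
      (fun θ => (1/2 : ℂ) * ((starRingEnd ℂ) (P (circleMap 0 R θ))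
        * (w * (circleMap 0 R θ - w)⁻¹)))
      MeasureTheory.volume 0 (2*π) :=
    (continuous_const.mul ((continuous_star.comp contP).mul contW)).intervalIntegrable _ _
  rw [intervalIntegral.integral_congr (fun θ _ => hpt θ),
    intervalIntegral.integral_sub (i1.sub i2) i3,
    intervalIntegral.integral_sub i1 i2]
  rw [show (∫ θ in (0:ℝ)..2*π, (lam/2 : ℂ) * (w * (circleMap 0 R θ - w)⁻¹))
      = (lam/2 : ℂ) * ∫ θ in (0:ℝ)..2*π, (w * (circleMap 0 R θ - w)⁻¹)
    from intervalIntegral.integral_const_mul _ _, E1 hR0 hw]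
  rw [show (∫ θ in (0:ℝ)..2*π, (1/2 : ℂ) * (P (circleMap 0 R θ) * (w * (circleMap 0 R θ - w)⁻¹)))
      = (1/2 : ℂ) * ∫ θ in (0:ℝ)..2*π, P (circleMap 0 R θ) * (w * (circleMap 0 R θ - w)⁻¹)
    from intervalIntegral.integral_const_mul _ _, E2 hP hR0 hR1 hw]
  rw [show (∫ θ in (0:ℝ)..2*π, (1/2 : ℂ) * ((starRingEnd ℂ) (P (circleMap 0 R θ))
        * (w * (circleMap 0 R θ - w)⁻¹)))
      = (1/2 : ℂ) * ∫ θ in (0:ℝ)..2*π, (starRingEnd ℂ) (P (circleMap 0 R θ))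
        * (w * (circleMap 0 R θ - w)⁻¹)
    from intervalIntegral.integral_const_mul _ _, E3 hP hR0 hR1 hw]
  rw [hP0]
  ring

lemma mass (lam : ℝ) (hP : DifferentiableOn ℂ P (ball 0 1)) (hP0 : P 0 = 0)
    (hR0 : 0 < R) (hR1 : R < 1) :
    ∫ θ in (0:ℝ)..2*π, (lam/2 - (P (circleMap 0 R θ)).re) = π * lam := by
  have contP := contP_circ hP hR0 hR1
  have h1 : ∫ θ in (0:ℝ)..2*π, (P (circleMap 0 R θ)).re = 0 := by
    rw [re_intervalIntegral _ _ _ contP, E4 hP hR0 hR1, hP0]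
    simp
  have i4 : IntervalIntegrable (fun θ => (P (circleMap 0 R θ)).re)
      MeasureTheory.volume 0 (2*π) :=
    (Complex.continuous_re.comp contP).intervalIntegrable _ _
  rw [intervalIntegral.integral_sub (intervalIntegrable_const) i4, h1,
    intervalIntegral.integral_const]
  simp
  ring




lemma im_intervalIntegral (a b : ℝ) (u : ℝ → ℂ)
    (hu : IntervalIntegrable u MeasureTheory.volume a b) :
    ∫ θ in a..b, (u θ).im = (∫ θ in a..b, u θ).im := by
  simp only [intervalIntegral, ← Complex.imCLM_apply]
  rw [ContinuousLinearMap.integral_comp_comm _ hu.1,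
    ContinuousLinearMap.integral_comp_comm _ hu.2, map_sub]

lemma keyB (lam : ℝ) (P : ℂ → ℂ) (z : ℂ)
    (hP : DifferentiableOn ℂ P (ball 0 1)) (hP0 : P 0 = 0)
    (hRe : ∀ w ∈ ball (0:ℂ) 1, (P w).re ≤ lam/2)
    (hz : ‖z‖ < 1) :
    |(∫ t in (0:ℝ)..1, z * dslope P 0 ((t:ℂ)*z)).im|
      ≤ lam * Real.arcsin (‖z‖) := by
  rcases eq_or_ne z 0 with rfl | hz0
  · simp
  set s := ‖z‖ with hs
  have hs0 : 0 < s := norm_pos_iff.mpr hz0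
  have hpi : (0:ℝ) < π := Real.pi_pos
  -- continuity of dslope
  have h0mem : (0:ℂ) ∈ ball (0:ℂ) 1 := by simp
  have contk : ContinuousOn (dslope P 0) (ball 0 1) :=
    (continuousOn_dslope (isOpen_ball.mem_nhds h0mem)).2
      ⟨hP.continuousOn, hP.differentiableAt (isOpen_ball.mem_nhds h0mem)⟩
  have maps01 : ∀ t : ℝ, t ∈ Icc (0:ℝ) 1 → (t:ℂ)*z ∈ ball (0:ℂ) 1 := by
    intro t ht
    rw [mem_ball_zero_iff, norm_mul, Complex.norm_real, Real.norm_eq_abs,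
      _root_.abs_of_nonneg ht.1]
    nlinarith [ht.2]
  have contu : ContinuousOn (fun t : ℝ => z * dslope P 0 ((t:ℂ)*z)) (Icc (0:ℝ) 1) := by
    apply ContinuousOn.mul continuousOn_const
    exact contk.comp ((Complex.continuous_ofReal.mul continuous_const).continuousOn) maps01
  have hui : IntervalIntegrable (fun t : ℝ => z * dslope P 0 ((t:ℂ)*z))
      MeasureTheory.volume 0 1 := by
    apply ContinuousOn.intervalIntegrable
    rwa [uIcc_of_le (by norm_num : (0:ℝ) ≤ 1)]
  -- main bound for each R
  have key : ∀ R : ℝ, s < R → R < 1 →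
      |(∫ t in (0:ℝ)..1, z * dslope P 0 ((t:ℂ)*z)).im| ≤ lam * Real.arcsin (s/R) := by
    intro R hsR hR1
    have hR0 : 0 < R := hs0.trans hsR
    set C : ℝ → ℂ := circleMap 0 R with hC
    have hCabs : ∀ θ, ‖C θ‖ = R := fun θ => by
      rw [hC, norm_circleMap_zero, _root_.abs_of_pos hR0]
    have hCne : ∀ θ, C θ ≠ 0 := fun θ => circleMap_ne_center hR0.ne'
    set v : ℝ → ℝ := fun θ => lam/2 - (P (C θ)).re with hv
    have hv0 : ∀ θ, 0 ≤ v θ := by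
      intro θ
      have : (P (C θ)).re ≤ lam/2 := by
        apply hRe
        rw [mem_ball_zero_iff, hCabs]
        exact hR1
      simp [hv]; linarith
    set F : ℝ → ℝ → ℝ := fun t θ => v θ * (z * (C θ - (t:ℂ)*z)⁻¹).im with hF
    have hden : ∀ (t : ℝ), |t| ≤ 1 → ∀ θ, C θ - (t:ℂ)*z ≠ 0 := by
      intro t ht θ h
      rw [sub_eq_zero] at h
      have := congrArg norm h
      rw [hCabs, norm_mul, Complex.norm_real, Real.norm_eq_abs] at this
      nlinarith [norm_nonneg z]
    -- step B : pointwise identity in t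
    have stepB : ∀ t : ℝ, t ∈ Ioc (0:ℝ) 1 →
        (z * dslope P 0 ((t:ℂ)*z)).im = (-1/π) * ∫ θ in (0:ℝ)..2*π, F t θ := by
      intro t ht
      have hpiC : (π:ℂ) ≠ 0 := by exact_mod_cast hpi.ne'
      have htC : (t:ℂ) ≠ 0 := by
        simp only [ne_eq, Complex.ofReal_eq_zero]; exact ht.1.ne'
      have htzne : (t:ℂ)*z ≠ 0 := mul_ne_zero htC hz0
      have htabs : ‖(t:ℂ)*z‖ < R := by
        rw [norm_mul, Complex.norm_real, Real.norm_eq_abs, _root_.abs_of_pos ht.1]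
        nlinarith [ht.2]
      have hH := herglotz_s9 lam hP hP0 hR0 hR1 htabs
      have contv : Continuous v := by
        simp only [hv]
        exact continuous_const.sub (Complex.continuous_re.comp (contP_circ hP hR0 hR1))
      have contX : Continuous (fun θ => z * (C θ - (t:ℂ)*z)⁻¹) := by
        apply continuous_const.mul
        apply Continuous.inv₀ (((continuous_circleMap 0 R)).sub continuous_const)
        intro θ
        exact hden t (by rw [_root_.abs_of_pos ht.1]; exact ht.2) θ
      set J := ∫ θ in (0:ℝ)..2*π, ((v θ : ℝ):ℂ) * (z * (C θ - (t:ℂ)*z)⁻¹) with hJ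
      have e3 : J = (t:ℂ)⁻¹ * ∫ θ in (0:ℝ)..2*π,
          ((lam/2 - (P (circleMap 0 R θ)).re : ℝ) : ℂ)
            * (((t:ℂ)*z) * (circleMap 0 R θ - (t:ℂ)*z)⁻¹) := by
        rw [hJ, ← intervalIntegral.integral_const_mul]
        apply intervalIntegral.integral_congr
        intro θ _
        simp only [hv, hC]
        have hd := hden t (by rw [_root_.abs_of_pos ht.1]; exact ht.2) θ
        simp only [hC] at hd
        field_simp
      have e4 : J = -(π:ℂ) * (z * dslope P 0 ((t:ℂ)*z)) := by
        rw [e3, hH, dslope_of_ne _ htzne, slope_def_field, hP0]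
        field_simp
        ring
      have e5 : z * dslope P 0 ((t:ℂ)*z) = ((-1/π : ℝ) : ℂ) * J := by
        rw [e4]
        push_cast
        field_simp
      have hJint : IntervalIntegrable (fun θ => ((v θ : ℝ):ℂ) * (z * (C θ - (t:ℂ)*z)⁻¹))
          MeasureTheory.volume 0 (2*π) :=
        ((Complex.continuous_ofReal.comp contv).mul contX).intervalIntegrable _ _
      have e6 : J.im = ∫ θ in (0:ℝ)..2*π, F t θ := by
        rw [hJ, ← im_intervalIntegral _ _ _ hJint]
        apply intervalIntegral.integral_congr
        intro θ _
        simp [hF, Complex.mul_im]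
      rw [e5, ← e6]
      simp [Complex.mul_im]
    -- Fubini
    have fub : ∫ t in (0:ℝ)..1, (∫ θ in (0:ℝ)..2*π, F t θ)
        = ∫ θ in (0:ℝ)..2*π, (∫ t in (0:ℝ)..1, F t θ) := by
      have h2pi : (0:ℝ) ≤ 2*π := by positivity
      have contv : Continuous v := by
        simp only [hv]
        exact continuous_const.sub (Complex.continuous_re.comp (contP_circ hP hR0 hR1))
      have contF : ContinuousOn (Function.uncurry F) (Icc (0:ℝ) 1 ×ˢ Icc (0:ℝ) (2*π)) := by
        have c1 : Continuous (fun q : ℝ × ℝ => C q.2 - (q.1:ℂ)*z) := by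
          apply Continuous.sub
          · exact (continuous_circleMap 0 R).comp continuous_snd
          · exact (Complex.continuous_ofReal.comp continuous_fst).mul continuous_const
        have hne : ∀ q : ℝ × ℝ, q ∈ Icc (0:ℝ) 1 ×ˢ Icc (0:ℝ) (2*π) →
            C q.2 - (q.1:ℂ)*z ≠ 0 := by
          intro q hq
          apply hden q.1 _ q.2
          rw [_root_.abs_of_nonneg hq.1.1]
          exact hq.1.2
        apply ContinuousOn.mul ((contv.comp continuous_snd).continuousOn)
        apply Complex.continuous_im.comp_continuousOn
        exact continuousOn_const.mul ((c1.continuousOn).inv₀ hne)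
      have hint : MeasureTheory.IntegrableOn (Function.uncurry F)
          (Ioc (0:ℝ) 1 ×ˢ Ioc (0:ℝ) (2*π)) := by
        apply MeasureTheory.IntegrableOn.mono_set
          (contF.integrableOn_compact (isCompact_Icc.prod isCompact_Icc))
        exact Set.prod_mono Ioc_subset_Icc_self Ioc_subset_Icc_self
      rw [intervalIntegral.integral_of_le (by norm_num : (0:ℝ) ≤ 1),
        intervalIntegral.integral_of_le h2pi]
      simp_rw [intervalIntegral.integral_of_le (by norm_num : (0:ℝ) ≤ 1),
        intervalIntegral.integral_of_le h2pi]
      apply MeasureTheory.integral_integral_swap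
      rw [MeasureTheory.Measure.prod_restrict, ← MeasureTheory.Measure.volume_eq_prod]
      exact hint
    -- inner integral
    have inner : ∀ θ : ℝ, (∫ t in (0:ℝ)..1, F t θ)
        = v θ * -((Complex.log (1 - z * (C θ)⁻¹)).im) := by
      intro θ
      have hc0 : C θ ≠ 0 := hCne θ
      have hzR : ‖z * (C θ)⁻¹‖ = s / R := by
        rw [norm_mul, norm_inv, hCabs]
        rfl
      have hsR1 : s / R < 1 := (div_lt_one hR0).2 hsR
      have hsR0 : 0 ≤ s / R := div_nonneg hs0.le hR0.le
      have hslit : ∀ t : ℝ, t ∈ Icc (0:ℝ) 1 →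
          (1 - (t:ℂ) * (z * (C θ)⁻¹)) ∈ Complex.slitPlane := by
        intro t ht
        rw [Complex.mem_slitPlane_iff]
        left
        have h1 : ‖(t:ℂ) * (z * (C θ)⁻¹)‖ ≤ s/R := by
          rw [norm_mul, Complex.norm_real, Real.norm_eq_abs, _root_.abs_of_nonneg ht.1, hzR]
          nlinarith [ht.2]
        have h2 := Complex.re_le_norm ((t:ℂ) * (z * (C θ)⁻¹))
        have h3 : ((t:ℂ) * (z * (C θ)⁻¹)).re ≤ s/R := le_trans h2 h1
        have h4 : (1 - (t:ℂ) * (z * (C θ)⁻¹)).re = 1 - ((t:ℂ) * (z * (C θ)⁻¹)).re := by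
          simp [Complex.sub_re]
        rw [h4]
        linarith
      have hdent : ∀ t : ℝ, t ∈ Icc (0:ℝ) 1 → C θ - (t:ℂ)*z ≠ 0 := by
        intro t ht
        exact hden t (by rw [_root_.abs_of_nonneg ht.1]; exact ht.2) θ
      have hasD : ∀ t ∈ uIcc (0:ℝ) 1,
          HasDerivAt (fun u : ℝ => -Complex.log (1 - (u:ℂ) * (z * (C θ)⁻¹)))
            (z * (C θ - (t:ℂ)*z)⁻¹) t := by
        intro t ht
        rw [uIcc_of_le (by norm_num : (0:ℝ) ≤ 1)] at ht
        have h1 : HasDerivAt (fun w : ℂ => w * (z * (C θ)⁻¹)) (z * (C θ)⁻¹) (t:ℂ) :=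
          hasDerivAt_mul_const _
        have h2 := h1.comp_ofReal
        have inner1 : HasDerivAt (fun u : ℝ => 1 - (u:ℂ) * (z * (C θ)⁻¹))
            (-(z * (C θ)⁻¹)) t := h2.const_sub 1
        have h3 := (inner1.clog_real (hslit t ht)).neg
        have hne1 : 1 - (t:ℂ) * (z * (C θ)⁻¹) ≠ 0 :=
          Complex.slitPlane_ne_zero (hslit t ht)
        have hd := hdent t ht
        have hval : -(-(z * (C θ)⁻¹) / (1 - (t:ℂ) * (z * (C θ)⁻¹)))
            = z * (C θ - (t:ℂ)*z)⁻¹ := by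
          rw [neg_div, neg_neg]
          rw [show (1 - (t:ℂ) * (z * (C θ)⁻¹)) = (C θ - (t:ℂ)*z) * (C θ)⁻¹ by
            field_simp]
          rw [div_eq_mul_inv, mul_inv, inv_inv]
          field_simp
        exact hval ▸ h3
      have contt : ContinuousOn (fun t : ℝ => z * (C θ - (t:ℂ)*z)⁻¹) (Icc (0:ℝ) 1) := by
        apply continuousOn_const.mul
        apply ContinuousOn.inv₀
        · exact (continuousOn_const.sub
            ((Complex.continuous_ofReal.continuousOn).mul continuousOn_const))
        · exact hdent
      have hintt : IntervalIntegrable (fun t : ℝ => z * (C θ - (t:ℂ)*z)⁻¹)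
          MeasureTheory.volume 0 1 := by
        apply ContinuousOn.intervalIntegrable
        rwa [uIcc_of_le (by norm_num : (0:ℝ) ≤ 1)]
      have ftc := intervalIntegral.integral_eq_sub_of_hasDerivAt hasD hintt
      have e7 : ∫ t in (0:ℝ)..1, z * (C θ - (t:ℂ)*z)⁻¹
          = -Complex.log (1 - z * (C θ)⁻¹) := by
        rw [ftc]
        simp [Complex.log_one]
      have e8 : ∫ t in (0:ℝ)..1, F t θ
          = v θ * (∫ t in (0:ℝ)..1, z * (C θ - (t:ℂ)*z)⁻¹).im := by
        simp only [hF]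
        rw [← im_intervalIntegral _ _ _ hintt, ← intervalIntegral.integral_const_mul]
      rw [e8, e7]
      simp
    -- assemble
    have contv : Continuous v := by
      simp only [hv]
      exact continuous_const.sub (Complex.continuous_re.comp (contP_circ hP hR0 hR1))
    have h2pi : (0:ℝ) ≤ 2*π := by positivity
    have hslit1 : ∀ θ : ℝ, (1 - z * (C θ)⁻¹) ∈ Complex.slitPlane := by
      intro θ
      rw [Complex.mem_slitPlane_iff]
      left
      have h1 : ‖z * (C θ)⁻¹‖ = s/R := by
        rw [norm_mul, norm_inv, hCabs]; rfl
      have h2 := Complex.re_le_norm (z * (C θ)⁻¹)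
      have hsR1 : s / R < 1 := (div_lt_one hR0).2 hsR
      simp only [Complex.sub_re, Complex.one_re]
      nlinarith
    have contL : Continuous (fun θ => (Complex.log (1 - z * (C θ)⁻¹)).im) := by
      apply Complex.continuous_im.comp
      apply continuous_iff_continuousAt.2
      intro θ
      have hcont : ContinuousAt (fun θ : ℝ => 1 - z * (C θ)⁻¹) θ :=
        (continuous_const.sub (continuous_const.mul
          ((continuous_circleMap 0 R).inv₀ hCne))).continuousAt
      exact ContinuousAt.comp (f := fun θ : ℝ => 1 - z * (C θ)⁻¹) (continuousAt_clog (hslit1 θ)) hcont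
    have big : (∫ t in (0:ℝ)..1, z * dslope P 0 ((t:ℂ)*z)).im
        = (1/π) * ∫ θ in (0:ℝ)..2*π, v θ * (Complex.log (1 - z * (C θ)⁻¹)).im := by
      rw [← im_intervalIntegral _ _ _ hui]
      rw [intervalIntegral.integral_congr_ae (MeasureTheory.ae_of_all _
        (fun t ht => stepB t (by rwa [uIoc_of_le (by norm_num : (0:ℝ) ≤ 1)] at ht)))]
      rw [intervalIntegral.integral_const_mul, fub]
      rw [intervalIntegral.integral_congr (fun θ _ => inner θ)]
      have : ∀ θ : ℝ, v θ * -((Complex.log (1 - z * (C θ)⁻¹)).im)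
          = -(v θ * (Complex.log (1 - z * (C θ)⁻¹)).im) := fun θ => by ring
      rw [intervalIntegral.integral_congr (fun θ _ => this θ), intervalIntegral.integral_neg]
      field_simp
    rw [big]
    have bnd1 : |∫ θ in (0:ℝ)..2*π, v θ * (Complex.log (1 - z * (C θ)⁻¹)).im|
        ≤ ∫ θ in (0:ℝ)..2*π, |v θ * (Complex.log (1 - z * (C θ)⁻¹)).im| :=
      intervalIntegral.abs_integral_le_integral_abs h2pi
    have bnd2 : ∫ θ in (0:ℝ)..2*π, |v θ * (Complex.log (1 - z * (C θ)⁻¹)).im|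
        ≤ ∫ θ in (0:ℝ)..2*π, v θ * Real.arcsin (s/R) := by
      apply intervalIntegral.integral_mono_on h2pi
      · exact ((contv.mul contL).abs).intervalIntegrable _ _
      · exact (contv.mul continuous_const).intervalIntegrable _ _
      · intro θ _
        rw [abs_mul, _root_.abs_of_nonneg (hv0 θ)]
        apply mul_le_mul_of_nonneg_left _ (hv0 θ)
        have h1 : ‖z * (C θ)⁻¹‖ = s/R := by
          rw [norm_mul, norm_inv, hCabs]; rfl
        have hsR1 : s / R < 1 := (div_lt_one hR0).2 hsR
        have := rot_arg_le (w := z * (C θ)⁻¹) (by rw [h1]; exact hsR1)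
        rwa [h1] at this
    have bnd3 : ∫ θ in (0:ℝ)..2*π, v θ * Real.arcsin (s/R)
        = π * lam * Real.arcsin (s/R) := by
      rw [intervalIntegral.integral_mul_const]
      rw [show (∫ θ in (0:ℝ)..2*π, v θ) = π * lam from mass lam hP hP0 hR0 hR1]
    rw [abs_mul]
    have : |1/π| = 1/π := _root_.abs_of_pos (by positivity)
    rw [this]
    calc (1/π) * |∫ θ in (0:ℝ)..2*π, v θ * (Complex.log (1 - z * (C θ)⁻¹)).im|
        ≤ (1/π) * (π * lam * Real.arcsin (s/R)) := by
          apply mul_le_mul_of_nonneg_left _ (by positivity)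
          exact le_trans bnd1 (le_trans bnd2 (le_of_eq bnd3))
      _ = lam * Real.arcsin (s/R) := by field_simp
  -- limit R → 1
  have hlim : Filter.Tendsto (fun R => lam * Real.arcsin (s/R))
      (nhdsWithin 1 (Iio 1)) (nhds (lam * Real.arcsin s)) := by
    apply Filter.Tendsto.mono_left _ nhdsWithin_le_nhds
    have hc : ContinuousAt (fun R => lam * Real.arcsin (s/R)) 1 := by
      apply ContinuousAt.mul continuousAt_const
      apply Real.continuous_arcsin.continuousAt.comp
      exact ContinuousAt.div continuousAt_const continuousAt_id one_ne_zero
    have := hc.tendsto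
    simpa using this
  apply ge_of_tendsto hlim
  filter_upwards [Ioo_mem_nhdsLT_of_mem (show (1:ℝ) ∈ Ioc s 1 from ⟨hz, le_refl 1⟩)] with R hR
  exact key R hR.1 hR.2



/-- rotation theorem in 𝒩(λ): if `0 < λ ≤ 1` and `f ∈ 𝒩(λ)`, then for every
`z ∈ 𝔻 \ {0}` with `|z| = r` one has `|arg (f z / z)| ≤ λ · arcsin r`. -/
theorem stmt9 (lam : ℝ) (hlam0 : 0 < lam) (hlam1 : lam ≤ 1)
    (f : ℂ → ℂ)
    (hf : DifferentiableOn ℂ f (ball 0 1))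
    (hf0 : f 0 = 0) (hfd0 : deriv f 0 = 1)
    (hfne : ∀ z ∈ ball (0:ℂ) 1, z ≠ 0 → f z ≠ 0)
    (hN : ∀ z ∈ ball (0:ℂ) 1, (z * deriv f z / f z).re < 1 + lam / 2) :
    ∀ z ∈ ball (0:ℂ) 1, z ≠ 0 → ∀ r : ℝ, ‖z‖ = r →
      |Complex.arg (f z / z)| ≤ lam * Real.arcsin r := by
  intro z hzb hz0 r hr
  subst hr
  have hball : (0:ℂ) ∈ ball (0:ℂ) 1 := by simp
  have hs1 : ‖z‖ < 1 := by
    rwa [mem_ball_zero_iff] at hzb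
  set g := dslope f 0 with hg
  have hgd : DifferentiableOn ℂ g (ball 0 1) := by
    intro w hw
    rcases eq_or_ne w 0 with rfl | hw0
    · obtain ⟨q, hq⟩ := hf.analyticAt (isOpen_ball.mem_nhds hball)
      exact (hq.has_fpower_series_dslope_fslope.analyticAt.differentiableAt).differentiableWithinAt
    · exact (differentiableWithinAt_dslope_of_ne hw0).2 (hf w hw)
  have hg0 : g 0 = 1 := by rw [hg, dslope_same, hfd0]
  have hgz : ∀ w ∈ ball (0:ℂ) 1, w ≠ 0 → g w = f w / w := by
    intro w _ hw0
    rw [hg, dslope_of_ne _ hw0, slope_def_field, hf0, sub_zero, sub_zero]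
  have hgne : ∀ w ∈ ball (0:ℂ) 1, g w ≠ 0 := by
    intro w hw
    rcases eq_or_ne w 0 with rfl | hw0
    · rw [hg0]; exact one_ne_zero
    · rw [hgz w hw hw0]
      exact div_ne_zero (hfne w hw hw0) hw0
  have hfzg : ∀ w ∈ ball (0:ℂ) 1, f w = w * g w := by
    intro w hw
    rcases eq_or_ne w 0 with rfl | hw0
    · simp [hf0]
    · rw [hgz w hw hw0]
      field_simp
  have hganal : AnalyticOnNhd ℂ g (ball 0 1) := hgd.analyticOnNhd isOpen_ball
  have hg' : DifferentiableOn ℂ (deriv g) (ball 0 1) := hganal.deriv.differentiableOn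
  set p : ℂ → ℂ := fun w => w * deriv g w / g w with hp
  have hpd : DifferentiableOn ℂ p (ball 0 1) :=
    (differentiableOn_id.mul hg').div hgd hgne
  have hp0 : p 0 = 0 := by simp [hp]
  have hpre : ∀ w ∈ ball (0:ℂ) 1, (p w).re ≤ lam/2 := by
    intro w hw
    rcases eq_or_ne w 0 with rfl | hw0
    · rw [hp0]; simp; linarith
    · have hfw : f w ≠ 0 := hfne w hw hw0
      have hgw : g w ≠ 0 := hgne w hw
      have hgda : DifferentiableAt ℂ g w := hgd.differentiableAt (isOpen_ball.mem_nhds hw)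
      have hfd : deriv f w = g w + w * deriv g w := by
        have heq : f =ᶠ[nhds w] fun u => u * g u := by
          filter_upwards [isOpen_ball.mem_nhds hw] with u hu
          exact hfzg u hu
        rw [heq.deriv_eq]
        have hmul := (hasDerivAt_id' (x := w)).mul hgda.hasDerivAt
        rw [show (fun u => u * g u) = (fun x => x) * g from rfl, hmul.deriv]
        ring
      have harg := hN w hw
      have hsplit : w * deriv f w / f w = 1 + p w := by
        rw [hfd, hfzg w hw, hp]
        field_simp
      rw [hsplit] at harg
      simp only [Complex.add_re, Complex.one_re] at harg
      linarith
  set k := dslope p 0 with hk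
  have hkcont : ContinuousOn k (ball 0 1) :=
    (continuousOn_dslope (isOpen_ball.mem_nhds hball)).2
      ⟨hpd.continuousOn, hpd.differentiableAt (isOpen_ball.mem_nhds hball)⟩
  have hkg_ne : ∀ w ∈ ball (0:ℂ) 1, w ≠ 0 → k w * g w = deriv g w := by
    intro w hw hw0
    rw [hk, dslope_of_ne _ hw0, slope_def_field, hp0, sub_zero, sub_zero, hp]
    field_simp [hgne w hw]
  have hkg : ∀ w ∈ ball (0:ℂ) 1, k w * g w = deriv g w := by
    intro w hw
    rcases eq_or_ne w 0 with rfl | hw0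
    · -- density argument
      have hcont1 : ContinuousAt (fun w => k w * g w) 0 :=
        ((hkcont.continuousAt (isOpen_ball.mem_nhds hball)).mul
          (hgd.continuousOn.continuousAt (isOpen_ball.mem_nhds hball)))
      have hcont2 : ContinuousAt (deriv g) 0 :=
        hg'.continuousOn.continuousAt (isOpen_ball.mem_nhds hball)
      have t1 : Filter.Tendsto (fun w => k w * g w) (nhdsWithin 0 {(0:ℂ)}ᶜ)
          (nhds (k 0 * g 0)) := hcont1.tendsto.mono_left nhdsWithin_le_nhds
      have t2 : Filter.Tendsto (deriv g) (nhdsWithin 0 {(0:ℂ)}ᶜ)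
          (nhds (deriv g 0)) := hcont2.tendsto.mono_left nhdsWithin_le_nhds
      have heq : (fun w => k w * g w) =ᶠ[nhdsWithin 0 {(0:ℂ)}ᶜ] deriv g := by
        have hb : ball (0:ℂ) 1 ∈ nhdsWithin (0:ℂ) {(0:ℂ)}ᶜ :=
          mem_nhdsWithin_of_mem_nhds (isOpen_ball.mem_nhds hball)
        filter_upwards [hb, self_mem_nhdsWithin] with w hw hw0
        exact hkg_ne w hw hw0
      exact tendsto_nhds_unique (t1.congr' heq) t2
    · exact hkg_ne w hw hw0
  -- the ODE trick
  set proj : ℝ → ℝ := fun t => max 0 (min 1 t) with hproj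
  have hproj01 : ∀ t, proj t ∈ Icc (0:ℝ) 1 := by
    intro t
    constructor
    · exact le_max_left _ _
    · simp [hproj]
  have hprojt : ∀ t ∈ Icc (0:ℝ) 1, proj t = t := by
    intro t ht
    simp [hproj, min_eq_right ht.2, max_eq_right ht.1]
  have hmaps : ∀ t : ℝ, ((proj t : ℝ):ℂ) * z ∈ ball (0:ℂ) 1 := by
    intro t
    rw [mem_ball_zero_iff, norm_mul, Complex.norm_real, Real.norm_eq_abs,
      _root_.abs_of_nonneg (hproj01 t).1]
    nlinarith [(hproj01 t).2, norm_nonneg z]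
  have hmaps' : ∀ t ∈ Icc (0:ℝ) 1, ((t : ℝ):ℂ) * z ∈ ball (0:ℂ) 1 := by
    intro t ht
    have := hmaps t
    rwa [hprojt t ht] at this
  set G : ℝ → ℂ := fun t => z * k (((proj t : ℝ):ℂ) * z) with hG
  have hGcont : Continuous G := by
    apply continuous_const.mul
    apply hkcont.comp_continuous _ hmaps
    exact (Complex.continuous_ofReal.comp
      (continuous_const.max (continuous_const.min continuous_id))).mul continuous_const
  set H : ℝ → ℂ := fun u => ∫ t in (0:ℝ)..u, G t with hH
  have hHd : ∀ u : ℝ, HasDerivAt H (G u) u := fun u =>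
    (hGcont.integral_hasStrictDerivAt 0 u).hasDerivAt
  have psi : ∀ u ∈ uIcc (0:ℝ) 1,
      HasDerivAt (fun v : ℝ => g ((v:ℂ)*z) * Complex.exp (-H v)) 0 u := by
    intro u hu
    rw [uIcc_of_le (by norm_num : (0:ℝ) ≤ 1)] at hu
    have hmem : (u:ℂ)*z ∈ ball (0:ℂ) 1 := hmaps' u hu
    have hgdw : DifferentiableAt ℂ g ((u:ℂ)*z) :=
      hgd.differentiableAt (isOpen_ball.mem_nhds hmem)
    have A : HasDerivAt (fun v : ℝ => g ((v:ℂ)*z)) (deriv g ((u:ℂ)*z) * z) u := by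
      have h1 : HasDerivAt (fun w : ℂ => g (w*z)) (deriv g ((u:ℂ)*z) * z) ((u:ℂ)) :=
        HasDerivAt.comp (u:ℂ) hgdw.hasDerivAt (hasDerivAt_mul_const z)
      exact h1.comp_ofReal
    have B : HasDerivAt (fun v : ℝ => Complex.exp (-H v))
        (Complex.exp (-H u) * (-G u)) u := ((hHd u).neg).cexp
    have hABval : deriv g ((u:ℂ)*z) * z * Complex.exp (-H u)
        + g ((u:ℂ)*z) * (Complex.exp (-H u) * (-G u)) = 0 := by
      have hkgw := hkg _ hmem
      have hGu : G u = z * k ((u:ℂ)*z) := by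
        rw [hG]
        simp only
        rw [hprojt u hu]
      rw [hGu, ← hkgw]
      ring
    exact hABval ▸ (A.mul B)
  have hFTC := intervalIntegral.integral_eq_sub_of_hasDerivAt psi
    (intervalIntegrable_const (c := (0:ℂ)))
  simp only [intervalIntegral.integral_const, smul_zero, sub_zero] at hFTC
  have hH0 : H 0 = 0 := intervalIntegral.integral_same
  have hFTC2 : g z * Complex.exp (-H 1) = 1 := by
    have := hFTC.symm
    rw [hH0] at this
    simp only [Complex.ofReal_one, one_mul, Complex.ofReal_zero, zero_mul, hg0,
      neg_zero, Complex.exp_zero, mul_one] at this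
    linear_combination this
  -- g z = exp (H 1)
  have hgz_exp : g z = Complex.exp (H 1) := by
    have h2 := congrArg (fun x => x * Complex.exp (H 1)) hFTC2
    simp only [one_mul] at h2
    rw [mul_assoc, ← Complex.exp_add] at h2
    simpa using h2
  have hH1 : H 1 = ∫ t in (0:ℝ)..1, z * dslope p 0 ((t:ℂ)*z) := by
    rw [hH]
    apply intervalIntegral.integral_congr
    intro t ht
    rw [uIcc_of_le (by norm_num : (0:ℝ) ≤ 1)] at ht
    simp only [hG, hk]
    rw [hprojt t ht]
  have hbound := keyB lam p z hpd hp0 hpre hs1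
  rw [← hH1] at hbound
  -- arg
  have hlt : lam * Real.arcsin (‖z‖) < Real.pi := by
    have h1 := Real.arcsin_le_pi_div_two (‖z‖)
    have h2 : 0 ≤ Real.arcsin (‖z‖) :=
      Real.arcsin_nonneg.2 (norm_nonneg z)
    nlinarith [Real.pi_pos]
  have him : (H 1).im ∈ Set.Ioc (-Real.pi) Real.pi := by
    have h3 := abs_le.1 hbound
    constructor
    · linarith [h3.1]
    · linarith [h3.2]
  have harg : Complex.arg (f z / z) = (H 1).im := by
    rw [show f z / z = g z from (hgz z hzb hz0).symm, hgz_exp,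
      Complex.exp_eq_exp_re_mul_sin_add_cos, ← Complex.ofReal_exp]
    exact Complex.arg_mul_cos_add_sin_mul_I (Real.exp_pos _) him
  rw [harg]
  exact hbound

end
end
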